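/- arXiv:2309.06224 — 2 statements merged into one kernel-verified Lean document; each statement's English description precedes it below -/
import Mathlib

section
/- Let Σ_Γ be a subshift of finite type without isolated points or empty cones and let E, E' ⊆ Σ_Γ be nonempty clopen sets. If f : E → E' is a rational homeomorphism, then f⁻¹ : E' → E is rational. Consequently, the set R_{Γ,E} of rational homeomorphisms E → E forms a group under composition. -/
open scoped Classical

noncomputable section

/-- A finite directed graph (loops and parallel edges are allowed). -/
structure FinDigraph : Type 1 where
  V : Type
  E : Type
  [fintypeV : Fintype V]
  [fintypeE : Fintype E]
  o : E → V
  t : E → V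

attribute [instance] FinDigraph.fintypeV FinDigraph.fintypeE

instance (Γ : FinDigraph) : TopologicalSpace Γ.E := ⊥
instance (Γ : FinDigraph) : DiscreteTopology Γ.E := ⟨rfl⟩

namespace FinDigraph

variable (Γ : FinDigraph)

/-- The subshift of finite type `Σ_Γ`: the set of all infinite directed paths in `Γ`,
viewed as a subset of the product space of all edge sequences (each edge's terminus is
the origin of the next edge). -/
def shift : Set (ℕ → Γ.E) := {x | ∀ i, Γ.t (x i) = Γ.o (x (i + 1))}

/-- Validity of a finite directed path starting at a given node. -/
def pathOk : Γ.V → List Γ.E → Prop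
  | _, [] => True
  | v, e :: l => Γ.o e = v ∧ pathOk (Γ.t e) l

/-- A finite directed path in `Γ` (a node together with a compatible list of edges;
a path with no edges is a node, regarded as a path of length `0`). -/
structure FinPath where
  start : Γ.V
  edges : List Γ.E
  ok : Γ.pathOk start edges

/-- Terminus of a list of edges starting at a given node. -/
def pathEndAux : Γ.V → List Γ.E → Γ.V
  | v, [] => v
  | _, e :: l => pathEndAux (Γ.t e) l

/-- The terminus `t(α)` of a finite directed path. -/
def pathEnd (α : Γ.FinPath) : Γ.V := Γ.pathEndAux α.start α.edges

/-- The length-0 path at a node `v`. -/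
def trivPath (v : Γ.V) : Γ.FinPath := ⟨v, [], by simp [pathOk]⟩

/-- The cone `C_α ⊆ Σ_Γ` of all infinite directed paths having `α` as a prefix. -/
def cone (α : Γ.FinPath) : Set (ℕ → Γ.E) :=
  {x | x ∈ Γ.shift ∧ Γ.o (x 0) = α.start ∧
    ∀ (i : ℕ) (h : i < α.edges.length), x i = α.edges.get ⟨i, h⟩}

/-- The canonical similarity `C_α → C_β` (for `t(α) = t(β)`) on the level of edge
sequences: delete the prefix `α` and attach the prefix `β`. -/
def splice (α β : Γ.FinPath) (x : ℕ → Γ.E) : ℕ → Γ.E := fun i =>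
  if h : i < β.edges.length then β.edges.get ⟨i, h⟩
  else x (i - β.edges.length + α.edges.length)

/-- Concatenation `α · ω` of a finite path with an infinite path (on sequences). -/
def catPath (α : Γ.FinPath) (x : ℕ → Γ.E) : ℕ → Γ.E :=
  Γ.splice (Γ.trivPath (Γ.pathEnd α)) α x

/-- The length of the path `f̄(α)`, i.e. of the greatest common prefix of all points
of `f(C_α)`. -/
def barLen (f : (ℕ → Γ.E) → ℕ → Γ.E) (α : Γ.FinPath) : ℕ :=
  sSup {n | ∀ x ∈ Γ.cone α, ∀ y ∈ Γ.cone α, ∀ i < n, f x i = f y i}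

/-- The local action `f|_α : C_{t(α)} → C_{t(f̄(α))}`, determined by
`f(α·ω) = f̄(α)·(f|_α)(ω)`.  It is recorded together with the node `t(α)`
(the node of its domain cone), and is extended by the identity off the cone
`C_{t(α)}`. -/
def localAction (f : (ℕ → Γ.E) → ℕ → Γ.E) (α : Γ.FinPath) :
    Γ.V × ((ℕ → Γ.E) → ℕ → Γ.E) :=
  (Γ.pathEnd α, fun w =>
    if w ∈ Γ.cone (Γ.trivPath (Γ.pathEnd α)) then
      fun i => f (Γ.catPath α w) (i + Γ.barLen f α)
    else w)

/-- A map is rational (on a domain `D`) if it has only finitely many distinct local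
actions at cones contained in `D`. -/
def RationalOn (f : (ℕ → Γ.E) → ℕ → Γ.E) (D : Set (ℕ → Γ.E)) : Prop :=
  (Γ.localAction f '' {α : Γ.FinPath | Γ.cone α ⊆ D}).Finite

/-- The nucleus `𝒩_f` of a map: the set of local actions `f|_α` that occur for
infinitely many finite paths `α` with `C_α` contained in the domain. -/
def nucleusOf (f : (ℕ → Γ.E) → ℕ → Γ.E) (D : Set (ℕ → Γ.E)) :
    Set (Γ.V × ((ℕ → Γ.E) → ℕ → Γ.E)) :=
  {p | {α : Γ.FinPath | Γ.cone α ⊆ D ∧ Γ.localAction f α = p}.Infinite}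

/-- A nondegenerate map on `Σ_Γ` with domain `D`: it takes values in `Σ_Γ` and maps no
cone contained in `D` to a single point. -/
def Nondegenerate (f : (ℕ → Γ.E) → ℕ → Γ.E) (D : Set (ℕ → Γ.E)) : Prop :=
  (∀ x ∈ D, f x ∈ Γ.shift) ∧
  ∀ α : Γ.FinPath, Γ.cone α ⊆ D → ¬∃ p, ∀ x ∈ Γ.cone α, f x = p

/-- Extension of a map `E → E'` between subsets of the sequence space to a globally
defined map (by the identity off `E`). -/
def homExt (E E' : Set (ℕ → Γ.E)) (f : ↥E → ↥E') : (ℕ → Γ.E) → ℕ → Γ.E :=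
  fun x => if h : x ∈ E then ↑(f ⟨x, h⟩) else x

/-- Extension of a permutation of `E` to a globally defined map. -/
def permExt (E : Set (ℕ → Γ.E)) (g : Equiv.Perm ↥E) : (ℕ → Γ.E) → ℕ → Γ.E :=
  Γ.homExt E E ⇑g

/-- `E` is a clopen subset of the subshift `Σ_Γ`. -/
def ClopenIn (E : Set (ℕ → Γ.E)) : Prop :=
  IsClopen {x : ↥Γ.shift | (x : ℕ → Γ.E) ∈ E}

/-- `U ⊆ Σ_Γ` is open in the subshift. -/
def OpenInShift (U : Set (ℕ → Γ.E)) : Prop :=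
  IsOpen {x : ↥Γ.shift | (x : ℕ → Γ.E) ∈ U}

/-- The subshift `Σ_Γ` has no isolated points. -/
def NoIsolatedPoints : Prop := ∀ x : ↥Γ.shift, ¬IsOpen ({x} : Set ↥Γ.shift)

/-- The subshift `Σ_Γ` has no empty cones. -/
def NoEmptyCones : Prop := ∀ α : Γ.FinPath, (Γ.cone α).Nonempty

/-- A permutation of `E` which is a homeomorphism and is a rational map:
an element of the rational group `R_{Γ,E}`. -/
def IsRatHomeo (E : Set (ℕ → Γ.E)) (g : Equiv.Perm ↥E) : Prop :=
  Continuous ⇑g ∧ Continuous ⇑g.symm ∧ Γ.RationalOn (Γ.permExt E g) E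

/-- `g` maps the cone `C_α` to the cone `C_β` by the canonical similarity
`α·ω ↦ β·ω`. -/
def RealizesCanonSim (E : Set (ℕ → Γ.E)) (g : Equiv.Perm ↥E) (α β : Γ.FinPath) : Prop :=
  ∀ x, ∀ hx : x ∈ E, x ∈ Γ.cone α → ↑(g ⟨x, hx⟩) = Γ.splice α β x

/-- A rational similarity group (RSG): a subgroup of the rational group `R_{Γ,E}` that
realizes the canonical similarity between any two cones `C_α, C_β ⊊ E` with
`t(α) = t(β)`. -/
def IsRSG (E : Set (ℕ → Γ.E)) (G : Subgroup (Equiv.Perm ↥E)) : Prop :=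
  (∀ g ∈ G, Γ.IsRatHomeo E g) ∧
  ∀ α β : Γ.FinPath, Γ.pathEnd α = Γ.pathEnd β → Γ.cone α ⊂ E → Γ.cone β ⊂ E →
    ∃ g ∈ G, Γ.RealizesCanonSim E g α β

/-- `h` locally agrees with the group `G`: every point has an open neighborhood on
which `h` coincides with some element of `G`. -/
def LocallyAgrees (E : Set (ℕ → Γ.E)) (G : Subgroup (Equiv.Perm ↥E))
    (h : Equiv.Perm ↥E) : Prop :=
  ∀ x : ↥E, ∃ U : Set ↥E, IsOpen U ∧ x ∈ U ∧ ∃ g ∈ G, ∀ u ∈ U, h u = g u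

/-- `G` is full as a group of homeomorphisms of `E`: every homeomorphism of `E` that
locally agrees with `G` already belongs to `G`. -/
def IsFullOn (E : Set (ℕ → Γ.E)) (G : Subgroup (Equiv.Perm ↥E)) : Prop :=
  ∀ h : Equiv.Perm ↥E, Continuous ⇑h → Continuous ⇑h.symm →
    Γ.LocallyAgrees E G h → h ∈ G

/-- The nucleus `𝒩_G` of a subgroup `G ≤ R_{Γ,E}`: the union of the nuclei of its
elements. -/
def groupNucleus (E : Set (ℕ → Γ.E)) (G : Subgroup (Equiv.Perm ↥E)) :
    Set (Γ.V × ((ℕ → Γ.E) → ℕ → Γ.E)) :=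
  ⋃ g ∈ G, Γ.nucleusOf (Γ.permExt E g) E

/-- An edge of the induced subgraph on a set `W` of nodes. -/
def InducedEdge (W : Set Γ.V) (e : Γ.E) : Prop := Γ.o e ∈ W ∧ Γ.t e ∈ W

/-- A path of the induced subgraph on `W`. -/
def PathIn (W : Set Γ.V) (α : Γ.FinPath) : Prop :=
  α.start ∈ W ∧ ∀ e ∈ α.edges, Γ.InducedEdge W e

/-- The induced subgraph on `W` is strongly connected and is not a directed cycle,
i.e. `Σ_{Γ₀}` is irreducible (where `Γ₀` is the induced subgraph on `W`). -/
def IrreducibleOn (W : Set Γ.V) : Prop :=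
  (∀ v ∈ W, ∀ w ∈ W, ∃ α : Γ.FinPath,
      α.start = v ∧ Γ.pathEnd α = w ∧ α.edges ≠ [] ∧ Γ.PathIn W α) ∧
  ¬∀ v ∈ W, ∃! e : Γ.E, Γ.InducedEdge W e ∧ Γ.o e = v

/-- `Σ_Γ` has an irreducible core: an induced subgraph `Γ₀` (on a node set `W`) with
`Σ_{Γ₀}` irreducible, such that every node has a directed path to `Γ₀` and every
sufficiently long directed path ends in `Γ₀`. -/
def HasIrreducibleCore : Prop :=
  ∃ W : Set Γ.V, Γ.IrreducibleOn W ∧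
    (∀ v : Γ.V, ∃ α : Γ.FinPath, α.start = v ∧ Γ.pathEnd α ∈ W) ∧
    ∃ N : ℕ, ∀ α : Γ.FinPath, α.edges.length = N → Γ.pathEnd α ∈ W

/-- `G ≤ R_{Γ,E}` is contracting: `Σ_Γ` has an irreducible core and the nucleus `𝒩_G`
is finite. -/
def IsContracting (E : Set (ℕ → Γ.E)) (G : Subgroup (Equiv.Perm ↥E)) : Prop :=
  Γ.HasIrreducibleCore ∧ (Γ.groupNucleus E G).Finite

/-- An element of the Thompson group `V_{Γ,E}`: there are partitions of `E` into cones
`C_{α_1},…,C_{α_k}` and `C_{β_1},…,C_{β_k}` with `t(α_i) = t(β_i)` such that `g` maps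
each `C_{α_i}` to `C_{β_i}` by the canonical similarity. -/
def IsThompson (E : Set (ℕ → Γ.E)) (g : Equiv.Perm ↥E) : Prop :=
  ∃ (k : ℕ) (α β : Fin k → Γ.FinPath),
    (∀ i, Γ.pathEnd (α i) = Γ.pathEnd (β i)) ∧
    E = (⋃ i, Γ.cone (α i)) ∧
    Pairwise (fun i j => Disjoint (Γ.cone (α i)) (Γ.cone (α j))) ∧
    E = (⋃ i, Γ.cone (β i)) ∧
    Pairwise (fun i j => Disjoint (Γ.cone (β i)) (Γ.cone (β j))) ∧
    ∀ i, Γ.RealizesCanonSim E g (α i) (β i)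

/-- A rational (eventually repeating) point `σ·τ^∞` of `Σ_Γ`. -/
def IsRationalPt (x : ℕ → Γ.E) : Prop :=
  ∃ σ τ : Γ.FinPath, τ.edges ≠ [] ∧
    (∀ (i : ℕ) (h : i < σ.edges.length), x i = σ.edges.get ⟨i, h⟩) ∧
    ∀ i : ℕ, σ.edges.length ≤ i →
      ∀ h : (i - σ.edges.length) % τ.edges.length < τ.edges.length,
        x i = τ.edges.get ⟨(i - σ.edges.length) % τ.edges.length, h⟩

/-- `β = f̄(α)`: the cone `C_β` is the smallest cone containing `f(C_α)`, with `β` the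
greatest common prefix of the points of `f(C_α)`. -/
def IsBar (f : (ℕ → Γ.E) → ℕ → Γ.E) (α β : Γ.FinPath) : Prop :=
  f '' Γ.cone α ⊆ Γ.cone β ∧
  ∀ γ : Γ.FinPath, f '' Γ.cone α ⊆ Γ.cone γ →
    Γ.cone β ⊆ Γ.cone γ ∧ γ.edges.length ≤ β.edges.length

end FinDigraph
namespace FinDigraph

variable {Γ : FinDigraph}

/-! ### Cylinders and basic topology -/

def cyl (x : ℕ → Γ.E) (N : ℕ) : Set (ℕ → Γ.E) := {y | ∀ i < N, y i = x i}

lemma self_mem_cyl (x : ℕ → Γ.E) (N : ℕ) : x ∈ cyl x N := fun _ _ => rfl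

lemma isOpen_cyl (x : ℕ → Γ.E) (N : ℕ) : IsOpen (cyl x N) := by
  have h : cyl x N = ⋂ i ∈ Finset.range N, (fun y : ℕ → Γ.E => y i) ⁻¹' {x i} := by
    ext y; simp [cyl]
  rw [h]
  exact isOpen_biInter_finset fun i _ =>
    (continuous_apply i).isOpen_preimage _ (isOpen_discrete _)

lemma exists_cyl_subset {U : Set (ℕ → Γ.E)} (hU : IsOpen U) {x : ℕ → Γ.E} (hx : x ∈ U) :
    ∃ N, cyl x N ⊆ U := by
  obtain ⟨I, u, hu, hsub⟩ := isOpen_pi_iff.1 hU x hx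
  refine ⟨(I.sup id) + 1, fun y hy => hsub ?_⟩
  intro a ha
  have hle : a ≤ I.sup id := Finset.le_sup (f := id) ha
  have hya : y a = x a := hy a (Nat.lt_succ_of_le hle)
  rw [hya]; exact (hu a ha).2

lemma isClosed_shift : IsClosed Γ.shift := by
  have h : Γ.shift = ⋂ i : ℕ,
      (fun x : ℕ → Γ.E => (x i, x (i + 1))) ⁻¹' {p : Γ.E × Γ.E | Γ.t p.1 = Γ.o p.2} := by
    ext x; simp [shift]
  rw [h]
  exact isClosed_iInter fun i =>
    IsClosed.preimage ((continuous_apply i).prodMk (continuous_apply (i + 1)))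
      (isClosed_discrete _)

lemma isCompact_shift : IsCompact Γ.shift := isClosed_shift.isCompact

/-- The coordinate conditions cutting out a cone. -/
def coneCond (α : Γ.FinPath) : Set (ℕ → Γ.E) :=
  {x | Γ.o (x 0) = α.start ∧ ∀ (i : ℕ) (h : i < α.edges.length), x i = α.edges.get ⟨i, h⟩}

lemma clopen_oCond (v : Γ.V) :
    IsClosed {x : ℕ → Γ.E | Γ.o (x 0) = v} ∧ IsOpen {x : ℕ → Γ.E | Γ.o (x 0) = v} := by
  have he : {x : ℕ → Γ.E | Γ.o (x 0) = v} = (fun y : ℕ → Γ.E => y 0) ⁻¹' {e | Γ.o e = v} := rfl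
  rw [he]
  exact ⟨IsClosed.preimage (continuous_apply 0) (isClosed_discrete _),
    (continuous_apply 0).isOpen_preimage _ (isOpen_discrete _)⟩

lemma cone_eq_shift_inter (α : Γ.FinPath) : Γ.cone α = Γ.shift ∩ coneCond α := by
  ext x; simp only [cone, coneCond, Set.mem_inter_iff, Set.mem_setOf_eq, and_assoc]

lemma isClopen_getCond (α : Γ.FinPath) (i : ℕ) :
    IsClosed {x : ℕ → Γ.E | ∀ h : i < α.edges.length, x i = α.edges.get ⟨i, h⟩} ∧
      IsOpen {x : ℕ → Γ.E | ∀ h : i < α.edges.length, x i = α.edges.get ⟨i, h⟩} := by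
  by_cases h : i < α.edges.length
  · have he : {x : ℕ → Γ.E | ∀ h : i < α.edges.length, x i = α.edges.get ⟨i, h⟩}
        = (fun y : ℕ → Γ.E => y i) ⁻¹' {α.edges.get ⟨i, h⟩} := by
      ext x
      constructor
      · intro H; exact H h
      · intro H _; exact H
    rw [he]
    exact ⟨IsClosed.preimage (continuous_apply i) (isClosed_discrete _),
      (continuous_apply i).isOpen_preimage _ (isOpen_discrete _)⟩
  · have he : {x : ℕ → Γ.E | ∀ h : i < α.edges.length, x i = α.edges.get ⟨i, h⟩}
        = Set.univ := by
      ext x; simp only [Set.mem_univ, iff_true, Set.mem_setOf_eq]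
      intro h'; exact absurd h' h
    rw [he]; exact ⟨isClosed_univ, isOpen_univ⟩

lemma coneCond_eq (α : Γ.FinPath) :
    coneCond α = {x : ℕ → Γ.E | Γ.o (x 0) = α.start} ∩
      ⋂ i ∈ Finset.range α.edges.length,
        {x : ℕ → Γ.E | ∀ h : i < α.edges.length, x i = α.edges.get ⟨i, h⟩} := by
  ext x
  simp only [coneCond, Set.mem_setOf_eq, Set.mem_inter_iff, Set.mem_iInter, Finset.mem_range]
  constructor
  · rintro ⟨h0, h1⟩; exact ⟨h0, fun i _ h => h1 i h⟩
  · rintro ⟨h0, h1⟩; exact ⟨h0, fun i h => h1 i h h⟩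

lemma isOpen_coneCond (α : Γ.FinPath) : IsOpen (coneCond α) := by
  rw [coneCond_eq]
  exact IsOpen.inter (clopen_oCond α.start).2
    (isOpen_biInter_finset fun i _ => (isClopen_getCond α i).2)

lemma isClosed_coneCond (α : Γ.FinPath) : IsClosed (coneCond α) := by
  rw [coneCond_eq]
  exact IsClosed.inter (clopen_oCond α.start).1
    (isClosed_biInter fun i _ => (isClopen_getCond α i).1)

lemma isClosed_cone (α : Γ.FinPath) : IsClosed (Γ.cone α) := by
  rw [cone_eq_shift_inter]; exact isClosed_shift.inter (isClosed_coneCond α)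

lemma isCompact_cone (α : Γ.FinPath) : IsCompact (Γ.cone α) := (isClosed_cone α).isCompact

/-! ### Cones have at least two points -/

lemma cone_two (hiso : Γ.NoIsolatedPoints) (hcones : Γ.NoEmptyCones) (α : Γ.FinPath) :
    ∃ x ∈ Γ.cone α, ∃ y ∈ Γ.cone α, x ≠ y := by
  obtain ⟨x, hx⟩ := hcones α
  by_contra hcon
  push_neg at hcon
  have hsing : ∀ y ∈ Γ.cone α, y = x := fun y hy => hcon y hy x hx
  have hxs : x ∈ Γ.shift := hx.1
  have hopen : IsOpen {z : ↥Γ.shift | (z : ℕ → Γ.E) ∈ coneCond α} :=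
    (isOpen_coneCond α).preimage continuous_subtype_val
  have heq : {z : ↥Γ.shift | (z : ℕ → Γ.E) ∈ coneCond α} = {(⟨x, hxs⟩ : ↥Γ.shift)} := by
    ext z
    simp only [Set.mem_setOf_eq, Set.mem_singleton_iff, Subtype.ext_iff]
    constructor
    · intro hz
      exact hsing z (by rw [cone_eq_shift_inter]; exact ⟨z.2, hz⟩)
    · intro hz
      have : (z : ℕ → Γ.E) ∈ Γ.cone α := by rw [hz]; exact hx
      rw [cone_eq_shift_inter] at this; exact this.2
  exact hiso ⟨x, hxs⟩ (heq ▸ hopen)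

/-! ### Finite paths from points of the shift -/

lemma pathOk_ofFn {x : ℕ → Γ.E} (hx : x ∈ Γ.shift) :
    ∀ n k, Γ.pathOk (Γ.o (x k)) (List.ofFn fun i : Fin n => x (k + i)) := by
  intro n
  induction n with
  | zero => intro k; simp [pathOk]
  | succ n ih =>
    intro k
    rw [List.ofFn_succ]
    simp only [pathOk]
    constructor
    · norm_num
    · have h0 : (k + ((0 : Fin (n + 1)) : ℕ)) = k := by norm_num
      rw [h0]
      have ht : Γ.t (x k) = Γ.o (x (k + 1)) := hx k
      rw [ht]
      have harg : (fun i : Fin n => x (k + ↑i.succ)) = fun i : Fin n => x ((k + 1) + ↑i) := by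
        funext i
        congr 1
        simp only [Fin.val_succ]
        omega
      rw [harg]
      exact ih (k + 1)

lemma pathEndAux_ofFn {x : ℕ → Γ.E} (hx : x ∈ Γ.shift) :
    ∀ n k, Γ.pathEndAux (Γ.o (x k)) (List.ofFn fun i : Fin n => x (k + i)) = Γ.o (x (k + n)) := by
  intro n
  induction n with
  | zero => intro k; simp [pathEndAux]
  | succ n ih =>
    intro k
    rw [List.ofFn_succ]
    simp only [pathEndAux]
    have h0 : (k + ((0 : Fin (n + 1)) : ℕ)) = k := by norm_num
    rw [h0]
    have ht : Γ.t (x k) = Γ.o (x (k + 1)) := hx k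
    rw [ht]
    have harg : (fun i : Fin n => x (k + ↑i.succ)) = fun i : Fin n => x ((k + 1) + ↑i) := by
      funext i
      congr 1
      simp only [Fin.val_succ]
      omega
    rw [harg, ih (k + 1)]
    have he : k + 1 + n = k + (n + 1) := by omega
    rw [he]

/-- The path formed by the first `n` edges of a point of the shift. -/
def prefixPath {x : ℕ → Γ.E} (hx : x ∈ Γ.shift) (n : ℕ) : Γ.FinPath :=
  ⟨Γ.o (x 0), List.ofFn fun i : Fin n => x i, by
    have := pathOk_ofFn hx n 0
    simpa using this⟩

@[simp] lemma prefixPath_length {x : ℕ → Γ.E} (hx : x ∈ Γ.shift) (n : ℕ) :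
    (prefixPath hx n).edges.length = n := by simp [prefixPath]

lemma prefixPath_start {x : ℕ → Γ.E} (hx : x ∈ Γ.shift) (n : ℕ) :
    (prefixPath hx n).start = Γ.o (x 0) := rfl

lemma prefixPath_end {x : ℕ → Γ.E} (hx : x ∈ Γ.shift) (n : ℕ) :
    Γ.pathEnd (prefixPath hx n) = Γ.o (x n) := by
  have := pathEndAux_ofFn hx n 0
  simp only [Nat.zero_add] at this
  simpa [pathEnd, prefixPath] using this

lemma prefixPath_get {x : ℕ → Γ.E} (hx : x ∈ Γ.shift) (n : ℕ) (i : ℕ)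
    (h : i < (prefixPath hx n).edges.length) : (prefixPath hx n).edges.get ⟨i, h⟩ = x i := by
  simp [prefixPath, List.get_ofFn]

lemma mem_cone_prefixPath {x : ℕ → Γ.E} (hx : x ∈ Γ.shift) (n : ℕ) {y : ℕ → Γ.E} :
    y ∈ Γ.cone (prefixPath hx n) ↔
      y ∈ Γ.shift ∧ Γ.o (y 0) = Γ.o (x 0) ∧ ∀ i < n, y i = x i := by
  constructor
  · rintro ⟨hs, h0, hpre⟩
    refine ⟨hs, h0, fun i hi => ?_⟩
    have h' : i < (prefixPath hx n).edges.length := by simpa using hi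
    rw [hpre i h', prefixPath_get hx n i h']
  · rintro ⟨hs, h0, hpre⟩
    refine ⟨hs, h0, fun i h' => ?_⟩
    rw [prefixPath_get hx n i h']
    exact hpre i (by simpa using h')

/-! ### Tails and concatenation -/

/-- Delete the first `n` edges of an infinite path. -/
def tl (n : ℕ) (x : ℕ → Γ.E) : ℕ → Γ.E := fun i => x (i + n)

lemma tl_shift {x : ℕ → Γ.E} (hx : x ∈ Γ.shift) (n : ℕ) : tl n x ∈ Γ.shift := by
  intro i
  show Γ.t (x (i + n)) = Γ.o (x (i + 1 + n))
  have h : i + 1 + n = i + n + 1 := by omega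
  rw [h]
  exact hx (i + n)

lemma mem_trivCone {v : Γ.V} {y : ℕ → Γ.E} :
    y ∈ Γ.cone (Γ.trivPath v) ↔ y ∈ Γ.shift ∧ Γ.o (y 0) = v := by
  simp [cone, trivPath]

lemma edges_eq_ofFn {α : Γ.FinPath} {x : ℕ → Γ.E} (hx : x ∈ Γ.cone α) :
    α.edges = List.ofFn fun i : Fin α.edges.length => x i := by
  refine List.ext_get (by simp) fun i h1 h2 => ?_
  rw [List.get_ofFn]
  exact (hx.2.2 i h1).symm

lemma cone_end {α : Γ.FinPath} {x : ℕ → Γ.E} (hx : x ∈ Γ.cone α) :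
    Γ.pathEnd α = Γ.o (x α.edges.length) := by
  have hs := hx.1
  unfold pathEnd
  have h0 := hx.2.1
  rw [edges_eq_ofFn hx, ← h0]
  have := pathEndAux_ofFn hs α.edges.length 0
  simp only [Nat.zero_add] at this
  simpa using this

lemma tl_mem_trivCone {α : Γ.FinPath} {x : ℕ → Γ.E} (hx : x ∈ Γ.cone α) :
    tl α.edges.length x ∈ Γ.cone (Γ.trivPath (Γ.pathEnd α)) := by
  refine mem_trivCone.2 ⟨tl_shift hx.1 _, ?_⟩
  show Γ.o (x (0 + α.edges.length)) = Γ.pathEnd α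
  rw [Nat.zero_add, cone_end hx]

lemma catPath_lt {α : Γ.FinPath} (w : ℕ → Γ.E) {i : ℕ} (h : i < α.edges.length) :
    Γ.catPath α w i = α.edges.get ⟨i, h⟩ := by
  simp [catPath, splice, h]

lemma catPath_ge {α : Γ.FinPath} (w : ℕ → Γ.E) {i : ℕ} (h : α.edges.length ≤ i) :
    Γ.catPath α w i = w (i - α.edges.length) := by
  simp [catPath, splice, Nat.not_lt.2 h, trivPath]

lemma catPath_mem_cone (hcones : Γ.NoEmptyCones) {α : Γ.FinPath} {w : ℕ → Γ.E}
    (hw : w ∈ Γ.cone (Γ.trivPath (Γ.pathEnd α))) : Γ.catPath α w ∈ Γ.cone α := by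
  obtain ⟨xh, hxh⟩ := hcones α
  obtain ⟨hws, hw0⟩ := mem_trivCone.1 hw
  refine ⟨?_, ?_, fun i h => catPath_lt w h⟩
  · intro i
    rcases lt_trichotomy (i + 1) α.edges.length with h | h | h
    · rw [catPath_lt w (by omega), catPath_lt w h]
      rw [← hxh.2.2 i (by omega), ← hxh.2.2 (i + 1) h]
      exact hxh.1 i
    · rw [catPath_lt w (show i < α.edges.length by omega), catPath_ge w (by omega)]
      rw [← hxh.2.2 i (by omega)]
      have h2 : i + 1 - α.edges.length = 0 := by omega
      rw [h2, hw0, cone_end hxh, ← h]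
      exact hxh.1 i
    · rw [catPath_ge w (by omega), catPath_ge w (by omega)]
      have harith : i + 1 - α.edges.length = (i - α.edges.length) + 1 := by omega
      rw [harith]
      exact hws (i - α.edges.length)
  · rcases Nat.eq_zero_or_pos α.edges.length with h | h
    · rw [catPath_ge w (by omega)]
      have h2 : 0 - α.edges.length = 0 := by omega
      rw [h2, hw0, cone_end hxh]
      rw [h]
      exact hxh.2.1
    · rw [catPath_lt w h, ← hxh.2.2 0 h]
      exact hxh.2.1

lemma catPath_tl {α : Γ.FinPath} {x : ℕ → Γ.E} (hx : x ∈ Γ.cone α) :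
    Γ.catPath α (tl α.edges.length x) = x := by
  funext i
  rcases lt_or_ge i α.edges.length with h | h
  · rw [catPath_lt _ h]; exact (hx.2.2 i h).symm
  · rw [catPath_ge _ h]
    show x (i - α.edges.length + α.edges.length) = x i
    congr 1
    omega

lemma tl_catPath {α : Γ.FinPath} (w : ℕ → Γ.E) :
    tl α.edges.length (Γ.catPath α w) = w := by
  funext i
  show Γ.catPath α w (i + α.edges.length) = w i
  rw [catPath_ge w (by omega)]
  congr 1
  omega

/-! ### The agreement set and `barLen` -/

/-- The set of `n` such that all images of points of `C_α` agree below `n`. -/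
def agreeSet (f : (ℕ → Γ.E) → ℕ → Γ.E) (α : Γ.FinPath) : Set ℕ :=
  {n | ∀ x ∈ Γ.cone α, ∀ y ∈ Γ.cone α, ∀ i < n, f x i = f y i}

lemma barLen_def (f : (ℕ → Γ.E) → ℕ → Γ.E) (α : Γ.FinPath) :
    Γ.barLen f α = sSup (agreeSet f α) := rfl

lemma zero_mem_agreeSet (f : (ℕ → Γ.E) → ℕ → Γ.E) (α : Γ.FinPath) :
    0 ∈ agreeSet f α := by intro x _ y _ i hi; omega

lemma agree_below_barLen (f : (ℕ → Γ.E) → ℕ → Γ.E) (α : Γ.FinPath) :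
    ∀ x ∈ Γ.cone α, ∀ y ∈ Γ.cone α, ∀ i < Γ.barLen f α, f x i = f y i := by
  by_cases hb : BddAbove (agreeSet f α)
  · exact Nat.sSup_mem ⟨0, zero_mem_agreeSet f α⟩ hb
  · rw [barLen_def, csSup_of_not_bddAbove hb, csSup_empty]
    intro x _ y _ i hi
    simp only [Nat.bot_eq_zero] at hi
    omega

lemma le_barLen {f : (ℕ → Γ.E) → ℕ → Γ.E} {α : Γ.FinPath} (hb : BddAbove (agreeSet f α))
    {n : ℕ} (hn : n ∈ agreeSet f α) : n ≤ Γ.barLen f α := le_csSup hb hn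

lemma bddAbove_agreeSet {f : (ℕ → Γ.E) → ℕ → Γ.E} {α : Γ.FinPath}
    (h : ∃ x ∈ Γ.cone α, ∃ y ∈ Γ.cone α, ∃ i, f x i ≠ f y i) : BddAbove (agreeSet f α) := by
  obtain ⟨x, hx, y, hy, i, hi⟩ := h
  refine ⟨i, fun n hn => ?_⟩
  by_contra hlt
  exact hi (hn x hx y hy i (by omega))

lemma exists_disagree_at_barLen {f : (ℕ → Γ.E) → ℕ → Γ.E} {α : Γ.FinPath}
    (hb : BddAbove (agreeSet f α)) :
    ∃ x ∈ Γ.cone α, ∃ y ∈ Γ.cone α, f x (Γ.barLen f α) ≠ f y (Γ.barLen f α) := by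
  have hnot : Γ.barLen f α + 1 ∉ agreeSet f α := by
    intro h
    have := le_csSup hb h
    rw [← barLen_def] at this
    omega
  simp only [agreeSet, Set.mem_setOf_eq, not_forall] at hnot
  obtain ⟨x, hx, y, hy, i, hi, hne⟩ := hnot
  rcases lt_or_ge i (Γ.barLen f α) with h | h
  · exact absurd (agree_below_barLen f α x hx y hy i h) hne
  · have : i = Γ.barLen f α := by omega
    rw [this] at hne
    exact ⟨x, hx, y, hy, hne⟩

/-! ### Extensions of maps between clopen sets -/

variable {E E' : Set (ℕ → Γ.E)}

lemma homExt_mem (f : ↥E → ↥E') {x : ℕ → Γ.E} (hx : x ∈ E) :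
    Γ.homExt E E' f x = ↑(f ⟨x, hx⟩) := dif_pos hx

lemma homExt_mem_set (f : ↥E → ↥E') {x : ℕ → Γ.E} (hx : x ∈ E) :
    Γ.homExt E E' f x ∈ E' := by rw [homExt_mem f hx]; exact (f ⟨x, hx⟩).2

lemma homExt_inj (f : ↥E ≃ ↥E') {x y : ℕ → Γ.E} (hx : x ∈ E) (hy : y ∈ E)
    (h : Γ.homExt E E' ⇑f x = Γ.homExt E E' ⇑f y) : x = y := by
  rw [homExt_mem ⇑f hx, homExt_mem ⇑f hy] at h
  have := f.injective (Subtype.ext h)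
  exact congrArg Subtype.val this

lemma homExt_symm_apply (f : ↥E ≃ ↥E') {x : ℕ → Γ.E} (hx : x ∈ E) :
    Γ.homExt E' E ⇑f.symm (Γ.homExt E E' ⇑f x) = x := by
  rw [homExt_mem ⇑f hx]
  rw [homExt_mem ⇑f.symm (f ⟨x, hx⟩).2]
  have : (⟨↑(f ⟨x, hx⟩), (f ⟨x, hx⟩).2⟩ : ↥E') = f ⟨x, hx⟩ := rfl
  rw [this, f.symm_apply_apply]

lemma continuousOn_homExt (f : ↥E ≃ₜ ↥E') : ContinuousOn (Γ.homExt E E' ⇑f) E := by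
  rw [continuousOn_iff_continuous_restrict]
  have h : E.restrict (Γ.homExt E E' ⇑f) = Subtype.val ∘ ⇑f := by
    funext z
    show Γ.homExt E E' ⇑f ↑z = ↑(f z)
    rw [homExt_mem ⇑f z.2]
  rw [show E.domRestrict (Γ.homExt E E' ⇑f) = Subtype.val ∘ ⇑f from h]
  exact continuous_subtype_val.comp f.continuous

/-! ### Uniform windows via compactness -/

lemma window {K : Set (ℕ → Γ.E)} (hK : IsCompact K) (W : (ℕ → Γ.E) → Set (ℕ → Γ.E))
    (hW : ∀ x ∈ K, ∃ N, ∀ y, (∀ i < N, y i = x i) → y ∈ W x) :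
    ∃ N, ∀ x ∈ K, ∀ y, (∀ i < N, x i = y i) → ∃ z ∈ K, x ∈ W z ∧ y ∈ W z := by
  classical
  choose! N hN using hW
  obtain ⟨t, htK, hcov⟩ := hK.elim_nhds_subcover (fun z => cyl z (N z))
    (fun z _ => (isOpen_cyl z (N z)).mem_nhds (self_mem_cyl z (N z)))
  refine ⟨t.sup N, fun x hx y hagree => ?_⟩
  obtain ⟨z, hzt, hxz⟩ := Set.mem_iUnion₂.1 (hcov hx)
  have hNz : N z ≤ t.sup N := Finset.le_sup hzt
  have hyz : y ∈ cyl z (N z) := fun i hi => by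
    rw [← hagree i (lt_of_lt_of_le hi hNz)]; exact hxz i hi
  exact ⟨z, htK z hzt, hN z (htK z hzt) x hxz, hN z (htK z hzt) y hyz⟩

/-- A clopen subset of the shift is determined by a finite window. -/
lemma exists_det (hEsub : E ⊆ Γ.shift) (hEclopen : Γ.ClopenIn E) :
    ∃ N, ∀ x ∈ E, ∀ y ∈ Γ.shift, (∀ i < N, x i = y i) → y ∈ E := by
  classical
  obtain ⟨A, hAopen, hA⟩ := isOpen_induced_iff.1 hEclopen.2
  obtain ⟨B, hBopen, hB⟩ := isOpen_induced_iff.1 hEclopen.1.isOpen_compl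
  set W : (ℕ → Γ.E) → Set (ℕ → Γ.E) := fun z => if z ∈ E then A else B with hWdef
  have hW : ∀ z ∈ Γ.shift, ∃ N, ∀ y, (∀ i < N, y i = z i) → y ∈ W z := by
    intro z hz
    by_cases hzE : z ∈ E
    · have hzA : z ∈ A := by
        have : (⟨z, hz⟩ : ↥Γ.shift) ∈ Subtype.val ⁻¹' A := by
          rw [hA]; exact hzE
        exact this
      obtain ⟨N, hN⟩ := exists_cyl_subset hAopen hzA
      exact ⟨N, fun y hy => by simpa [hWdef, hzE] using hN hy⟩
    · have hzB : z ∈ B := by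
        have : (⟨z, hz⟩ : ↥Γ.shift) ∈ Subtype.val ⁻¹' B := by
          rw [hB]; exact hzE
        exact this
      obtain ⟨N, hN⟩ := exists_cyl_subset hBopen hzB
      exact ⟨N, fun y hy => by simpa [hWdef, hzE] using hN hy⟩
  obtain ⟨N, hN⟩ := window isCompact_shift W hW
  refine ⟨N, fun x hx y hy hagree => ?_⟩
  obtain ⟨z, hzK, hxW, hyW⟩ := hN x (hEsub hx) y hagree
  by_cases hzE : z ∈ E
  · have hyA : y ∈ A := by simpa [hWdef, hzE] using hyW
    have : (⟨y, hy⟩ : ↥Γ.shift) ∈ Subtype.val ⁻¹' A := hyA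
    rw [hA] at this
    exact this
  · have hxB : x ∈ B := by simpa [hWdef, hzE] using hxW
    have : (⟨x, hEsub hx⟩ : ↥Γ.shift) ∈ Subtype.val ⁻¹' B := hxB
    rw [hB] at this
    exact absurd hx this

/-- Uniform continuity on a compact set, in terms of windows. -/
lemma exists_uc {K : Set (ℕ → Γ.E)} (hK : IsCompact K) {g : (ℕ → Γ.E) → ℕ → Γ.E}
    (hg : ContinuousOn g K) (n : ℕ) :
    ∃ N, ∀ x ∈ K, ∀ y ∈ K, (∀ i < N, x i = y i) → ∀ i < n, g x i = g y i := by
  set W : (ℕ → Γ.E) → Set (ℕ → Γ.E) := fun z => {y | y ∈ K → ∀ i < n, g y i = g z i}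
    with hWdef
  have hW : ∀ z ∈ K, ∃ N, ∀ y, (∀ i < N, y i = z i) → y ∈ W z := by
    intro z hz
    have hmem : g ⁻¹' cyl (g z) n ∈ nhdsWithin z K :=
      hg z hz ((isOpen_cyl (g z) n).mem_nhds (self_mem_cyl (g z) n))
    obtain ⟨U, hUopen, hzU, hUsub⟩ := mem_nhdsWithin.1 hmem
    obtain ⟨N, hN⟩ := exists_cyl_subset hUopen hzU
    refine ⟨N, fun y hy hyK => ?_⟩
    have : y ∈ U ∩ K := ⟨hN hy, hyK⟩
    exact hUsub this
  obtain ⟨N, hN⟩ := window hK W hW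
  refine ⟨N, fun x hx y hy hagree i hi => ?_⟩
  obtain ⟨z, hzK, hxW, hyW⟩ := hN x hx y hagree
  rw [hxW hx i hi, ← hyW hy i hi]

/-! ### A uniform bound for branching in cones -/

lemma exists_D (hiso : Γ.NoIsolatedPoints) (hcones : Γ.NoEmptyCones) :
    ∃ D : ℕ, ∀ α : Γ.FinPath, ∃ z ∈ Γ.cone α, ∃ z' ∈ Γ.cone α,
      ∃ i < α.edges.length + D, z i ≠ z' i := by
  classical
  have H : ∀ v : Γ.V, ∃ i, ∃ u ∈ Γ.cone (Γ.trivPath v), ∃ u' ∈ Γ.cone (Γ.trivPath v),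
      u i ≠ u' i := by
    intro v
    obtain ⟨u, hu, u', hu', hne⟩ := cone_two hiso hcones (Γ.trivPath v)
    have : ∃ i, u i ≠ u' i := by
      by_contra hc
      push_neg at hc
      exact hne (funext hc)
    obtain ⟨i, hi⟩ := this
    exact ⟨i, u, hu, u', hu', hi⟩
  choose idx u hu u' hu' hne using H
  refine ⟨(Finset.univ.sup fun v : Γ.V => idx v + 1), fun α => ?_⟩
  set v := Γ.pathEnd α
  refine ⟨Γ.catPath α (u v), catPath_mem_cone hcones (hu v),
    Γ.catPath α (u' v), catPath_mem_cone hcones (hu' v), α.edges.length + idx v, ?_, ?_⟩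
  · have : idx v + 1 ≤ Finset.univ.sup fun v : Γ.V => idx v + 1 :=
      Finset.le_sup (f := fun v : Γ.V => idx v + 1) (Finset.mem_univ v)
    omega
  · rw [catPath_ge _ (by omega), catPath_ge _ (by omega)]
    have harith : α.edges.length + idx v - α.edges.length = idx v := by omega
    rw [harith]
    exact hne v

/-! ### Finiteness of short paths -/

lemma finite_short_paths (B : ℕ) : {α : Γ.FinPath | α.edges.length < B}.Finite := by
  have hinj : Set.InjOn (fun α : Γ.FinPath => (α.start, α.edges))
      {α : Γ.FinPath | α.edges.length < B} := by
    intro a _ b _ hab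
    simp only [Prod.mk.injEq] at hab
    cases a; cases b
    simp_all
  have himg : (fun α : Γ.FinPath => (α.start, α.edges)) '' {α : Γ.FinPath | α.edges.length < B}
      ⊆ (Set.univ : Set Γ.V) ×ˢ {l : List Γ.E | l.length < B} := by
    rintro ⟨v, l⟩ ⟨α, hα, heq⟩
    simp only [Prod.mk.injEq] at heq
    refine ⟨Set.mem_univ _, ?_⟩
    rw [← heq.2]
    exact hα
  have hfin : ((Set.univ : Set Γ.V) ×ˢ {l : List Γ.E | l.length < B}).Finite :=
    Set.Finite.prod Set.finite_univ (List.finite_length_lt Γ.E B)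
  exact Set.Finite.of_finite_image (hfin.subset himg) hinj

/-! ### Local actions: basic facts -/

lemma localAction_fst (f : (ℕ → Γ.E) → ℕ → Γ.E) (α : Γ.FinPath) :
    (Γ.localAction f α).1 = Γ.pathEnd α := rfl

lemma localAction_snd_mem (f : (ℕ → Γ.E) → ℕ → Γ.E) (α : Γ.FinPath) {w : ℕ → Γ.E}
    (hw : w ∈ Γ.cone (Γ.trivPath (Γ.pathEnd α))) :
    (Γ.localAction f α).2 w = fun i => f (Γ.catPath α w) (i + Γ.barLen f α) := by
  simp only [localAction]
  rw [if_pos hw]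

lemma localAction_snd_not_mem (f : (ℕ → Γ.E) → ℕ → Γ.E) (α : Γ.FinPath) {w : ℕ → Γ.E}
    (hw : w ∉ Γ.cone (Γ.trivPath (Γ.pathEnd α))) :
    (Γ.localAction f α).2 w = w := by
  simp only [localAction]
  rw [if_neg hw]

lemma localAction_snd_apply (f : (ℕ → Γ.E) → ℕ → Γ.E) {α : Γ.FinPath} {x : ℕ → Γ.E}
    (hx : x ∈ Γ.cone α) (i : ℕ) :
    (Γ.localAction f α).2 (tl α.edges.length x) i = f x (i + Γ.barLen f α) := by
  rw [localAction_snd_mem f α (tl_mem_trivCone hx)]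
  simp only
  rw [catPath_tl hx]

lemma localAction_inj {E E' : Set (ℕ → Γ.E)} (hcones : Γ.NoEmptyCones) (f : ↥E ≃ₜ ↥E')
    {α : Γ.FinPath} (hα : Γ.cone α ⊆ E) {u u' : ℕ → Γ.E}
    (hu : u ∈ Γ.cone (Γ.trivPath (Γ.pathEnd α))) (hu' : u' ∈ Γ.cone (Γ.trivPath (Γ.pathEnd α)))
    (h : (Γ.localAction (Γ.homExt E E' ⇑f) α).2 u = (Γ.localAction (Γ.homExt E E' ⇑f) α).2 u') :
    u = u' := by
  set F := Γ.homExt E E' ⇑f with hF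
  have hcu : Γ.catPath α u ∈ Γ.cone α := catPath_mem_cone hcones hu
  have hcu' : Γ.catPath α u' ∈ Γ.cone α := catPath_mem_cone hcones hu'
  have hFeq : F (Γ.catPath α u) = F (Γ.catPath α u') := by
    funext i
    rcases lt_or_ge i (Γ.barLen F α) with hi | hi
    · exact agree_below_barLen F α _ hcu _ hcu' i hi
    · have h1 : F (Γ.catPath α u) i = (Γ.localAction F α).2 u (i - Γ.barLen F α) := by
        rw [localAction_snd_mem F α hu]
        simp only
        congr 1
        omega
      have h2 : F (Γ.catPath α u') i = (Γ.localAction F α).2 u' (i - Γ.barLen F α) := by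
        rw [localAction_snd_mem F α hu']
        simp only
        congr 1
        omega
      rw [h1, h2, h]
  have := homExt_inj f.toEquiv (hα hcu) (hα hcu') hFeq
  calc u = tl α.edges.length (Γ.catPath α u) := (tl_catPath u).symm
    _ = tl α.edges.length (Γ.catPath α u') := by rw [this]
    _ = u' := tl_catPath u'

lemma continuous_catPathFun (α : Γ.FinPath) : Continuous (Γ.catPath α) := by
  refine continuous_pi fun i => ?_
  by_cases h : i < α.edges.length
  · have he : (fun w : ℕ → Γ.E => Γ.catPath α w i) = fun _ => α.edges.get ⟨i, h⟩ :=
      funext fun w => catPath_lt w h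
    rw [he]; exact continuous_const
  · have he : (fun w : ℕ → Γ.E => Γ.catPath α w i) = fun w => w (i - α.edges.length) :=
      funext fun w => catPath_ge w (by omega)
    rw [he]; exact continuous_apply _

lemma continuous_tl (m : ℕ) : Continuous (tl m : (ℕ → Γ.E) → ℕ → Γ.E) :=
  continuous_pi fun i => continuous_apply (i + m)

lemma continuousOn_localAction_snd {E E' : Set (ℕ → Γ.E)} (hcones : Γ.NoEmptyCones)
    (f : ↥E ≃ₜ ↥E') {α : Γ.FinPath} (hα : Γ.cone α ⊆ E) :
    ContinuousOn (Γ.localAction (Γ.homExt E E' ⇑f) α).2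
      (Γ.cone (Γ.trivPath (Γ.pathEnd α))) := by
  set F := Γ.homExt E E' ⇑f with hF
  have hmaps : Set.MapsTo (Γ.catPath α) (Γ.cone (Γ.trivPath (Γ.pathEnd α))) E :=
    fun w hw => hα (catPath_mem_cone hcones hw)
  have hco : ContinuousOn (fun w => tl (Γ.barLen F α) (F (Γ.catPath α w)))
      (Γ.cone (Γ.trivPath (Γ.pathEnd α))) := by
    refine (continuous_tl (Γ.barLen F α)).comp_continuousOn ?_
    exact (continuousOn_homExt f).comp (continuous_catPathFun α).continuousOn hmaps
  refine ContinuousOn.congr hco ?_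
  intro w hw
  rw [localAction_snd_mem F α hw]
  rfl

/-! ### A uniform expansivity bound for the local actions of a rational map -/

lemma exists_K1 {E E' : Set (ℕ → Γ.E)} (hcones : Γ.NoEmptyCones)
    (f : ↥E ≃ₜ ↥E')
    (hf : (Γ.localAction (Γ.homExt E E' ⇑f) '' {α : Γ.FinPath | Γ.cone α ⊆ E}).Finite) :
    ∃ K, ∀ q ∈ Γ.localAction (Γ.homExt E E' ⇑f) '' {α : Γ.FinPath | Γ.cone α ⊆ E},
      ∀ u ∈ Γ.cone (Γ.trivPath q.1), ∀ u' ∈ Γ.cone (Γ.trivPath q.1),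
        u 0 ≠ u' 0 → ∃ j < K, q.2 u j ≠ q.2 u' j := by
  classical
  set F := Γ.homExt E E' ⇑f with hF
  set Q := Γ.localAction F '' {α : Γ.FinPath | Γ.cone α ⊆ E} with hQ
  -- per-element bound
  have hper : ∀ q ∈ Q, ∃ K, ∀ u ∈ Γ.cone (Γ.trivPath q.1), ∀ u' ∈ Γ.cone (Γ.trivPath q.1),
      u 0 ≠ u' 0 → ∃ j < K, q.2 u j ≠ q.2 u' j := by
    rintro q ⟨α, hα, rfl⟩
    set C := Γ.cone (Γ.trivPath (Γ.pathEnd α)) with hC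
    set P := (C ×ˢ C) ∩ {p : (ℕ → Γ.E) × (ℕ → Γ.E) | p.1 0 ≠ p.2 0} with hP
    have hPcomp : IsCompact P := by
      refine IsCompact.inter_right ((isCompact_cone _).prod (isCompact_cone _)) ?_
      have he : {p : (ℕ → Γ.E) × (ℕ → Γ.E) | p.1 0 ≠ p.2 0} =
          (fun p : (ℕ → Γ.E) × (ℕ → Γ.E) => (p.1 0, p.2 0)) ⁻¹'
            {e : Γ.E × Γ.E | e.1 ≠ e.2} := rfl
      rw [he]
      exact IsClosed.preimage
        (((continuous_apply 0).comp continuous_fst).prodMk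
          ((continuous_apply 0).comp continuous_snd)) (isClosed_discrete _)
    -- a disagreement coordinate for each pair
    have hdis : ∀ p : ↥P, ∃ j,
        (Γ.localAction F α).2 p.val.1 j ≠ (Γ.localAction F α).2 p.val.2 j := by
      rintro ⟨⟨u, u'⟩, ⟨hu, hu'⟩, hne0⟩
      by_contra hc
      push_neg at hc
      have : u = u' := localAction_inj hcones f hα hu hu' (funext hc)
      exact hne0 (by rw [this])
    choose j hj using hdis
    -- relatively open neighborhoods
    have hcont := continuousOn_localAction_snd hcones f hα
    have hnbhd : ∀ p : ↥P, ∃ O : Set ((ℕ → Γ.E) × (ℕ → Γ.E)), IsOpen O ∧ p.val ∈ O ∧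
        ∀ p' ∈ O ∩ P,
          (Γ.localAction F α).2 p'.1 (j p) = (Γ.localAction F α).2 p.val.1 (j p) ∧
          (Γ.localAction F α).2 p'.2 (j p) = (Γ.localAction F α).2 p.val.2 (j p) := by
      intro p
      set φ : (ℕ → Γ.E) × (ℕ → Γ.E) → Γ.E × Γ.E := fun p' =>
        ((Γ.localAction F α).2 p'.1 (j p), (Γ.localAction F α).2 p'.2 (j p)) with hφ
      have hφcont : ContinuousOn φ P := by
        refine ContinuousOn.prodMk ?_ ?_
        · have h1 : ContinuousOn (fun p' : (ℕ → Γ.E) × (ℕ → Γ.E) =>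
              (Γ.localAction F α).2 p'.1) P := by
            refine ContinuousOn.comp hcont continuous_fst.continuousOn ?_
            rintro ⟨u, u'⟩ ⟨⟨hu, _⟩, _⟩
            exact hu
          exact (continuous_apply (j p)).comp_continuousOn h1
        · have h1 : ContinuousOn (fun p' : (ℕ → Γ.E) × (ℕ → Γ.E) =>
              (Γ.localAction F α).2 p'.2) P := by
            refine ContinuousOn.comp hcont continuous_snd.continuousOn ?_
            rintro ⟨u, u'⟩ ⟨⟨_, hu'⟩, _⟩
            exact hu'
          exact (continuous_apply (j p)).comp_continuousOn h1
      have hmem : φ ⁻¹' {φ p.val} ∈ nhdsWithin p.val P :=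
        hφcont p.val p.2 ((isOpen_discrete _).mem_nhds rfl)
      obtain ⟨O, hOopen, hpO, hOsub⟩ := mem_nhdsWithin.1 hmem
      refine ⟨O, hOopen, hpO, ?_⟩
      intro p' hp'
      have := hOsub hp'
      simp only [Set.mem_preimage, Set.mem_singleton_iff, hφ, Prod.mk.injEq] at this
      exact this
    choose O hOopen hpO hOprop using hnbhd
    -- compactness
    have hcover : P ⊆ ⋃ p : ↥P, O p := by
      intro x hx
      exact Set.mem_iUnion.2 ⟨⟨x, hx⟩, hpO ⟨x, hx⟩⟩
    obtain ⟨t, ht⟩ := hPcomp.elim_finite_subcover O hOopen hcover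
    refine ⟨(t.sup fun p => j p) + 1, ?_⟩
    intro u hu u' hu' hne0
    have hup : (u, u') ∈ P := ⟨⟨hu, hu'⟩, hne0⟩
    obtain ⟨p, hpt, hmem⟩ := Set.mem_iUnion₂.1 (ht hup)
    refine ⟨j p, ?_, ?_⟩
    · have : j p ≤ t.sup fun p => j p := Finset.le_sup (f := fun p => j p) hpt
      omega
    · have h1 := hOprop p (u, u') ⟨hmem, hup⟩
      simp only at h1
      rw [h1.1, h1.2]
      exact hj p
  -- combine over the finite set Q
  have hmemT : ∀ q ∈ hf.toFinset, ∃ K, ∀ u ∈ Γ.cone (Γ.trivPath q.1),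
      ∀ u' ∈ Γ.cone (Γ.trivPath q.1), u 0 ≠ u' 0 → ∃ j < K, q.2 u j ≠ q.2 u' j := by
    intro q hq
    exact hper q (hf.mem_toFinset.1 hq)
  choose! Kfun hK using hmemT
  refine ⟨hf.toFinset.sup Kfun, ?_⟩
  intro q hq u hu u' hu' hne0
  have hqT : q ∈ hf.toFinset := hf.mem_toFinset.2 hq
  obtain ⟨jj, hjlt, hjne⟩ := hK q hqT u hu u' hu' hne0
  refine ⟨jj, ?_, hjne⟩
  have : Kfun q ≤ hf.toFinset.sup Kfun := Finset.le_sup hqT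
  omega

/-! ### Compactness of clopen subsets -/

lemma isCompact_clopen {E : Set (ℕ → Γ.E)} (hEsub : E ⊆ Γ.shift) (hEclopen : Γ.ClopenIn E) :
    IsCompact E := by
  have hcs : CompactSpace ↥Γ.shift := isCompact_iff_compactSpace.1 isCompact_shift
  have h1 : IsCompact {z : ↥Γ.shift | (z : ℕ → Γ.E) ∈ E} := hEclopen.1.isCompact
  have h2 := h1.image continuous_subtype_val
  have he : Subtype.val '' {z : ↥Γ.shift | (z : ℕ → Γ.E) ∈ E} = E := by
    ext x
    constructor
    · rintro ⟨z, hz, rfl⟩; exact hz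
    · intro hx; exact ⟨⟨x, hEsub hx⟩, hx, rfl⟩
  rwa [he] at h2

/-! ### Reconstruction data for local actions of an inverse map -/

/-- Prepend the word `δ` and then skip `a` letters. -/
def glueWord (δ : List Γ.E) (a : ℕ) (w : ℕ → Γ.E) : ℕ → Γ.E := fun j =>
  if h : j < δ.length then δ.get ⟨j, h⟩ else w (j - δ.length + a)

/-- Choice-based inverse of the second component of a local action. -/
noncomputable def cinv (q : Γ.V × ((ℕ → Γ.E) → ℕ → Γ.E)) (z : ℕ → Γ.E) : ℕ → Γ.E :=
  if h : ∃ u, u ∈ Γ.cone (Γ.trivPath q.1) ∧ q.2 u = z then h.choose else z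

/-- Reconstruction of a local action of the inverse map from finite data. -/
noncomputable def reconInv (q : Γ.V × ((ℕ → Γ.E) → ℕ → Γ.E)) (δ : List Γ.E) (a : ℕ)
    (v : Γ.V) : Γ.V × ((ℕ → Γ.E) → ℕ → Γ.E) :=
  (v, fun w => if w ∈ Γ.cone (Γ.trivPath v) then cinv q (glueWord δ a w) else w)

/-! ### The inverse of a rational homeomorphism is rational -/

lemma inv_rational (hiso : Γ.NoIsolatedPoints) (hcones : Γ.NoEmptyCones)
    {E E' : Set (ℕ → Γ.E)} (hEsub : E ⊆ Γ.shift) (hEclopen : Γ.ClopenIn E)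
    (hE'sub : E' ⊆ Γ.shift) (hE'clopen : Γ.ClopenIn E')
    (f : ↥E ≃ₜ ↥E') (hf : Γ.RationalOn (Γ.homExt E E' ⇑f) E) :
    Γ.RationalOn (Γ.homExt E' E ⇑f.symm) E' := by
  classical
  set F := Γ.homExt E E' ⇑f with hFdef
  set G := Γ.homExt E' E ⇑f.symm with hGdef
  set Q := Γ.localAction F '' {α : Γ.FinPath | Γ.cone α ⊆ E} with hQdef
  have hfQ : Q.Finite := hf
  obtain ⟨D, hD⟩ := exists_D hiso hcones
  obtain ⟨K₁, hK₁⟩ := exists_K1 hcones f hf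
  obtain ⟨NE, hNE⟩ := exists_det hEsub hEclopen
  set NE1 := max NE 1 with hNE1
  have hGcont : ContinuousOn G E' := continuousOn_homExt f.symm
  obtain ⟨B₀, hB₀⟩ := exists_uc (isCompact_clopen hE'sub hE'clopen) hGcont NE1
  -- G is injective on E'
  have hGinj : ∀ y ∈ E', ∀ y' ∈ E', G y = G y' → y = y' := by
    intro y hy y' hy' h
    exact homExt_inj f.symm.toEquiv hy hy' h
  -- G of a point of E' is in E
  have hGmem : ∀ y ∈ E', G y ∈ E := fun y hy => homExt_mem_set ⇑f.symm hy
  -- F ∘ G = id on E'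
  have hFG : ∀ y ∈ E', F (G y) = y := by
    intro y hy
    rw [hGdef, homExt_mem ⇑f.symm hy, hFdef, homExt_mem ⇑f (f.symm ⟨y, hy⟩).2]
    have h1 : (⟨↑(f.symm ⟨y, hy⟩), (f.symm ⟨y, hy⟩).2⟩ : ↥E) = f.symm ⟨y, hy⟩ := rfl
    rw [h1, f.apply_symm_apply]
  -- boundedness of the agreement sets of G
  have hbddG : ∀ β : Γ.FinPath, Γ.cone β ⊆ E' → BddAbove (agreeSet G β) := by
    intro β hβ
    obtain ⟨y₁, hy₁, y₂, hy₂, hyne⟩ := cone_two hiso hcones β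
    apply bddAbove_agreeSet
    refine ⟨y₁, hy₁, y₂, hy₂, ?_⟩
    have hGne : G y₁ ≠ G y₂ := fun h => hyne (hGinj y₁ (hβ hy₁) y₂ (hβ hy₂) h)
    by_contra hc
    push_neg at hc
    exact hGne (funext hc)
  -- long cones are not exceptional
  have hexc : ∀ β : Γ.FinPath, Γ.cone β ⊆ E' → B₀ ≤ β.edges.length →
      NE1 ≤ Γ.barLen G β := by
    intro β hβ hlen
    have hmem : NE1 ∈ agreeSet G β := by
      intro y hy y' hy' i hi
      refine hB₀ y (hβ hy) y' (hβ hy') ?_ i hi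
      intro i' hi'
      rw [hy.2.2 i' (by omega), hy'.2.2 i' (by omega)]
    exact le_barLen (hbddG β hβ) hmem
  -- the main claim: non-exceptional local actions are reconstructible
  have hmain : ∀ β : Γ.FinPath, Γ.cone β ⊆ E' → NE1 ≤ Γ.barLen G β →
      ∃ q ∈ Q, ∃ δ : List Γ.E, ∃ a : ℕ, δ.length ≤ K₁ ∧ a ≤ D ∧
        Γ.localAction G β = reconInv q δ a (Γ.pathEnd β) := by
    intro β hβE' hm'
    obtain ⟨y₁, hy₁, -⟩ := cone_two hiso hcones β
    set x₀ := G y₁ with hx₀def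
    have hx₀E : x₀ ∈ E := hGmem y₁ (hβE' hy₁)
    have hx₀s : x₀ ∈ Γ.shift := hEsub hx₀E
    set α := prefixPath hx₀s (Γ.barLen G β) with hαdef
    have hlenα : α.edges.length = Γ.barLen G β := prefixPath_length hx₀s _
    -- G maps the cone of β into the cone of α
    have hGCβ : ∀ y ∈ Γ.cone β, G y ∈ Γ.cone α := by
      intro y hy
      refine (mem_cone_prefixPath hx₀s _).2 ⟨hEsub (hGmem y (hβE' hy)), ?_, ?_⟩
      · have h0 : G y 0 = x₀ 0 := agree_below_barLen G β y hy y₁ hy₁ 0 (by omega)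
        rw [h0]
      · intro i hi
        exact agree_below_barLen G β y hy y₁ hy₁ i hi
    have hαE : Γ.cone α ⊆ E := by
      intro x hx
      obtain ⟨hxs, hx0, hxpre⟩ := (mem_cone_prefixPath hx₀s _).1 hx
      refine hNE x₀ hx₀E x hxs ?_
      intro i hi
      exact (hxpre i (by omega)).symm
    have hq : Γ.localAction F α ∈ Q := ⟨α, hαE, rfl⟩
    set q := Γ.localAction F α with hqdef
    set m := Γ.barLen F α with hmdef
    -- the key computation: for y in the cone of β, the tail of y at m is q.2 of the
    -- tail of G y
    have hkey : ∀ y ∈ Γ.cone β, ∀ i : ℕ,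
        q.2 (tl α.edges.length (G y)) i = y (i + m) := by
      intro y hy i
      rw [hqdef, localAction_snd_apply F (hGCβ y hy) i, hFG y (hβE' hy)]
    set δ := β.edges.drop m with hδdef
    set a := m - β.edges.length with hadef
    have hδlen' : δ.length = β.edges.length - m := by
      rw [hδdef, List.length_drop]
    -- m is at most the length of β plus D
    have hmle : m ≤ β.edges.length + D := by
      obtain ⟨z, hz, z', hz', i, hilt, hine⟩ := hD β
      by_contra hgt
      push_neg at hgt
      apply hine
      have h1 : z i = F (G z) i := (congrFun (hFG z (hβE' hz)) i).symm
      have h2 : z' i = F (G z') i := (congrFun (hFG z' (hβE' hz')) i).symm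
      rw [h1, h2]
      exact agree_below_barLen F α _ (hGCβ z hz) _ (hGCβ z' hz') i (by omega)
    have haD : a ≤ D := by
      rw [hadef]; omega
    -- the length of δ is at most K₁
    have hδlen : δ.length ≤ K₁ := by
      rcases le_or_gt β.edges.length m with hc | hc
      · omega
      · obtain ⟨y, hy, y', hy', hdis⟩ := exists_disagree_at_barLen (hbddG β hβE')
        have hune : (tl α.edges.length (G y)) 0 ≠ (tl α.edges.length (G y')) 0 := by
          show G y (0 + α.edges.length) ≠ G y' (0 + α.edges.length)
          rw [Nat.zero_add, hlenα]
          exact hdis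
        obtain ⟨jj, hjK, hjne⟩ := hK₁ q hq _ (tl_mem_trivCone (hGCβ y hy))
          _ (tl_mem_trivCone (hGCβ y' hy')) hune
        have hyj : y (jj + m) ≠ y' (jj + m) := by
          rw [← hkey y hy jj, ← hkey y' hy' jj]
          exact hjne
        have hag : β.edges.length ≤ jj + m := by
          by_contra hlt
          push_neg at hlt
          exact hyj (by rw [hy.2.2 (jj + m) hlt, hy'.2.2 (jj + m) hlt])
        omega
    -- reconstruction
    refine ⟨q, hq, δ, a, hδlen, haD, ?_⟩
    have hfst : (Γ.localAction G β).1 = Γ.pathEnd β := rfl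
    refine Prod.ext hfst ?_
    show (Γ.localAction G β).2 = (reconInv q δ a (Γ.pathEnd β)).2
    funext w
    by_cases hw : w ∈ Γ.cone (Γ.trivPath (Γ.pathEnd β))
    · rw [localAction_snd_mem G β hw]
      simp only [reconInv]
      rw [if_pos hw]
      set y := Γ.catPath β w with hydef
      have hyβ : y ∈ Γ.cone β := catPath_mem_cone hcones hw
      set u := tl α.edges.length (G y) with hudef
      have huC : u ∈ Γ.cone (Γ.trivPath (Γ.pathEnd α)) := tl_mem_trivCone (hGCβ y hyβ)
      have hqu : q.2 u = glueWord δ a w := by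
        funext jj
        rw [hudef, hkey y hyβ jj]
        by_cases hj : jj < δ.length
        · have hjlen : jj + m < β.edges.length := by omega
          rw [hyβ.2.2 (jj + m) hjlen]
          have hrhs : glueWord δ a w jj = δ.get ⟨jj, hj⟩ := dif_pos hj
          rw [hrhs]
          simp only [List.get_eq_getElem, hδdef, List.getElem_drop]
          congr 1
          omega
        · push_neg at hj
          have hge : β.edges.length ≤ jj + m := by omega
          have hlhs : y (jj + m) = w (jj + m - β.edges.length) := by
            rw [hydef]
            exact catPath_ge w hge
          have hrhs : glueWord δ a w jj = w (jj - δ.length + a) := dif_neg (by omega)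
          rw [hlhs, hrhs]
          congr 1
          omega
      have hex : ∃ u', u' ∈ Γ.cone (Γ.trivPath q.1) ∧ q.2 u' = glueWord δ a w :=
        ⟨u, huC, hqu⟩
      have hcinv : cinv q (glueWord δ a w) = hex.choose := dif_pos hex
      have huniq : hex.choose = u := by
        have h1 := hex.choose_spec
        exact localAction_inj hcones f hαE h1.1 huC (by rw [h1.2, hqu])
      rw [hcinv, huniq, hudef]
      funext i
      show G y (i + Γ.barLen G β) = G y (i + α.edges.length)
      rw [hlenα]
    · rw [localAction_snd_not_mem G β hw]
      simp only [reconInv]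
      rw [if_neg hw]
  -- assemble the finiteness statement
  have hT : ((Q ×ˢ ({δ : List Γ.E | δ.length ≤ K₁} ×ˢ (Set.Iic D ×ˢ
      (Set.univ : Set Γ.V)))).Finite) :=
    hfQ.prod (((List.finite_length_le Γ.E K₁)).prod ((Set.finite_Iic D).prod
      Set.finite_univ))
  have hfin : ((Γ.localAction G '' {β : Γ.FinPath | β.edges.length < B₀}) ∪
      ((fun p : (Γ.V × ((ℕ → Γ.E) → ℕ → Γ.E)) × List Γ.E × ℕ × Γ.V =>
        reconInv p.1 p.2.1 p.2.2.1 p.2.2.2) ''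
        (Q ×ˢ ({δ : List Γ.E | δ.length ≤ K₁} ×ˢ (Set.Iic D ×ˢ
          (Set.univ : Set Γ.V)))))).Finite :=
    ((finite_short_paths B₀).image _).union (hT.image _)
  refine Set.Finite.subset hfin ?_
  rintro - ⟨β, hβ, rfl⟩
  by_cases hlen : β.edges.length < B₀
  · exact Or.inl ⟨β, hlen, rfl⟩
  · right
    obtain ⟨q, hq, δ, a, hδ, ha, heq⟩ := hmain β hβ (hexc β hβ (by omega))
    exact ⟨(q, δ, a, Γ.pathEnd β), ⟨hq, hδ, ha, Set.mem_univ _⟩, heq.symm⟩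

/-! ### The identity is rational -/

lemma permExt_one {E : Set (ℕ → Γ.E)} : Γ.permExt E (1 : Equiv.Perm ↥E) = id := by
  funext x
  by_cases h : x ∈ E
  · simp [permExt, homExt, h]
  · simp [permExt, homExt, h]

lemma id_rational (hiso : Γ.NoIsolatedPoints) (hcones : Γ.NoEmptyCones)
    (E : Set (ℕ → Γ.E)) : Γ.RationalOn (id : (ℕ → Γ.E) → ℕ → Γ.E) E := by
  classical
  obtain ⟨D, hD⟩ := exists_D hiso hcones
  have hmain : ∀ α : Γ.FinPath, ∃ a ≤ D,
      Γ.localAction (id : (ℕ → Γ.E) → ℕ → Γ.E) α =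
        (Γ.pathEnd α, fun w =>
          if w ∈ Γ.cone (Γ.trivPath (Γ.pathEnd α)) then tl a w else w) := by
    intro α
    have hbdd : BddAbove (agreeSet (id : (ℕ → Γ.E) → ℕ → Γ.E) α) := by
      apply bddAbove_agreeSet
      obtain ⟨x, hx, y, hy, hne⟩ := cone_two hiso hcones α
      have hex : ∃ i, x i ≠ y i := by
        by_contra hc; push_neg at hc; exact hne (funext hc)
      obtain ⟨i, hi⟩ := hex
      exact ⟨x, hx, y, hy, i, hi⟩
    have hlow : α.edges.length ≤ Γ.barLen (id : (ℕ → Γ.E) → ℕ → Γ.E) α := by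
      refine le_barLen hbdd ?_
      intro x hx y hy i hi
      show x i = y i
      rw [hx.2.2 i hi, hy.2.2 i hi]
    have hup : Γ.barLen (id : (ℕ → Γ.E) → ℕ → Γ.E) α ≤ α.edges.length + D := by
      obtain ⟨z, hz, z', hz', i, hilt, hine⟩ := hD α
      by_contra hgt
      push_neg at hgt
      exact hine (agree_below_barLen (id : (ℕ → Γ.E) → ℕ → Γ.E) α z hz z' hz' i (by omega))
    refine ⟨Γ.barLen (id : (ℕ → Γ.E) → ℕ → Γ.E) α - α.edges.length, by omega, ?_⟩
    refine Prod.ext rfl ?_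
    funext w
    by_cases hw : w ∈ Γ.cone (Γ.trivPath (Γ.pathEnd α))
    · rw [localAction_snd_mem (id : (ℕ → Γ.E) → ℕ → Γ.E) α hw]
      show _ = if w ∈ Γ.cone (Γ.trivPath (Γ.pathEnd α)) then
        tl (Γ.barLen (id : (ℕ → Γ.E) → ℕ → Γ.E) α - α.edges.length) w else w
      rw [if_pos hw]
      funext i
      show Γ.catPath α w (i + Γ.barLen (id : (ℕ → Γ.E) → ℕ → Γ.E) α) =
        w (i + (Γ.barLen (id : (ℕ → Γ.E) → ℕ → Γ.E) α - α.edges.length))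
      rw [catPath_ge w (by omega)]
      congr 1
      omega
    · rw [localAction_snd_not_mem (id : (ℕ → Γ.E) → ℕ → Γ.E) α hw]
      show _ = if w ∈ Γ.cone (Γ.trivPath (Γ.pathEnd α)) then _ else w
      rw [if_neg hw]
  have hfin : ((fun p : Γ.V × ℕ =>
      ((p.1, fun w => if w ∈ Γ.cone (Γ.trivPath p.1) then tl p.2 w else w) :
        Γ.V × ((ℕ → Γ.E) → ℕ → Γ.E))) ''
      ((Set.univ : Set Γ.V) ×ˢ Set.Iic D)).Finite :=
    (Set.finite_univ.prod (Set.finite_Iic D)).image _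
  refine Set.Finite.subset hfin ?_
  rintro - ⟨α, -, rfl⟩
  obtain ⟨a, haD, heq⟩ := hmain α
  exact ⟨(Γ.pathEnd α, a), ⟨Set.mem_univ _, haD⟩, heq.symm⟩

/-! ### Compositions of rational homeomorphisms are rational -/

/-- The agreement set of the composition of two local actions. -/
def pairSet (q₁ q₂ : Γ.V × ((ℕ → Γ.E) → ℕ → Γ.E)) : Set ℕ :=
  {k | ∀ w ∈ Γ.cone (Γ.trivPath q₂.1), ∀ w' ∈ Γ.cone (Γ.trivPath q₂.1), ∀ j < k,
    q₁.2 (q₂.2 w) j = q₁.2 (q₂.2 w') j}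

noncomputable def pairLen (q₁ q₂ : Γ.V × ((ℕ → Γ.E) → ℕ → Γ.E)) : ℕ :=
  sSup (pairSet q₁ q₂)

/-- Reconstruction of a local action of a composite from the local actions of the
factors. -/
noncomputable def reconComp (q₁ q₂ : Γ.V × ((ℕ → Γ.E) → ℕ → Γ.E)) :
    Γ.V × ((ℕ → Γ.E) → ℕ → Γ.E) :=
  (q₂.1, fun w => if w ∈ Γ.cone (Γ.trivPath q₂.1) then
    tl (pairLen q₁ q₂) (q₁.2 (q₂.2 w)) else w)

lemma comp_rational (hiso : Γ.NoIsolatedPoints) (hcones : Γ.NoEmptyCones)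
    {E : Set (ℕ → Γ.E)} (hEsub : E ⊆ Γ.shift) (hEclopen : Γ.ClopenIn E)
    (g₁ g₂ : Equiv.Perm ↥E) (hg₁c : Continuous ⇑g₁) (hg₁c' : Continuous ⇑g₁.symm)
    (hg₂c : Continuous ⇑g₂) (hg₂c' : Continuous ⇑g₂.symm)
    (h₁ : Γ.RationalOn (Γ.permExt E g₁) E) (h₂ : Γ.RationalOn (Γ.permExt E g₂) E) :
    Γ.RationalOn (Γ.permExt E (g₁ * g₂)) E := by
  classical
  set f₁ : ↥E ≃ₜ ↥E :=
    { toEquiv := g₁, continuous_toFun := hg₁c, continuous_invFun := hg₁c' } with hf₁def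
  set f₂ : ↥E ≃ₜ ↥E :=
    { toEquiv := g₂, continuous_toFun := hg₂c, continuous_invFun := hg₂c' } with hf₂def
  set F₁ := Γ.permExt E g₁ with hF₁def
  set F₂ := Γ.permExt E g₂ with hF₂def
  set H := Γ.permExt E (g₁ * g₂) with hHdef
  have hF₁f : F₁ = Γ.homExt E E ⇑f₁ := rfl
  have hF₂f : F₂ = Γ.homExt E E ⇑f₂ := rfl
  have hHF : ∀ x, H x = F₁ (F₂ x) := by
    intro x
    by_cases h : x ∈ E
    · have h2 : F₂ x = ↑(g₂ ⟨x, h⟩) := dif_pos h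
      have h2E : F₂ x ∈ E := by rw [h2]; exact (g₂ ⟨x, h⟩).2
      have h1 : F₁ (F₂ x) = ↑(g₁ ⟨F₂ x, h2E⟩) := dif_pos h2E
      have hH : H x = ↑((g₁ * g₂) ⟨x, h⟩) := dif_pos h
      have hsub : (⟨F₂ x, h2E⟩ : ↥E) = g₂ ⟨x, h⟩ := Subtype.ext h2
      rw [hH, h1, hsub]
      rfl
    · have h2 : F₂ x = x := dif_neg h
      have hH : H x = x := dif_neg h
      have h1 : F₁ x = x := dif_neg h
      rw [hH, h2, h1]
  have hF₂mem : ∀ x ∈ E, F₂ x ∈ E := fun x hx => homExt_mem_set ⇑f₂ hx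
  have hHinj : ∀ x ∈ E, ∀ y ∈ E, H x = H y → x = y := by
    intro x hx y hy h
    rw [hHF x, hHF y] at h
    exact homExt_inj f₂.toEquiv hx hy
      (homExt_inj f₁.toEquiv (hF₂mem x hx) (hF₂mem y hy) h)
  have hF₂inj : ∀ x ∈ E, ∀ y ∈ E, F₂ x = F₂ y → x = y := fun x hx y hy h =>
    homExt_inj f₂.toEquiv hx hy h
  obtain ⟨NE, hNE⟩ := exists_det hEsub hEclopen
  set NE1 := max NE 1 with hNE1
  obtain ⟨U₂, hU₂⟩ := exists_uc (isCompact_clopen hEsub hEclopen)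
    (by rw [hF₂f] at *; exact continuousOn_homExt f₂ : ContinuousOn F₂ E) NE1
  set Q₁ := Γ.localAction F₁ '' {α : Γ.FinPath | Γ.cone α ⊆ E} with hQ₁def
  set Q₂ := Γ.localAction F₂ '' {α : Γ.FinPath | Γ.cone α ⊆ E} with hQ₂def
  -- long cones are not exceptional
  have hexc : ∀ α : Γ.FinPath, Γ.cone α ⊆ E → U₂ ≤ α.edges.length →
      NE1 ≤ Γ.barLen F₂ α := by
    intro α hα hlen
    have hbdd : BddAbove (agreeSet F₂ α) := by
      apply bddAbove_agreeSet
      obtain ⟨x, hx, y, hy, hne⟩ := cone_two hiso hcones α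
      have hFne : F₂ x ≠ F₂ y := fun h => hne (hF₂inj x (hα hx) y (hα hy) h)
      have hex : ∃ i, F₂ x i ≠ F₂ y i := by
        by_contra hc; push_neg at hc; exact hFne (funext hc)
      obtain ⟨i, hi⟩ := hex
      exact ⟨x, hx, y, hy, i, hi⟩
    refine le_barLen hbdd ?_
    intro x hx y hy i hi
    refine hU₂ x (hα hx) y (hα hy) ?_ i hi
    intro i' hi'
    rw [hx.2.2 i' (by omega), hy.2.2 i' (by omega)]
  -- main claim
  have hmain : ∀ α : Γ.FinPath, Γ.cone α ⊆ E → NE1 ≤ Γ.barLen F₂ α →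
      ∃ q₁ ∈ Q₁, ∃ q₂ ∈ Q₂, Γ.localAction H α = reconComp q₁ q₂ := by
    intro α hαE hm₂
    obtain ⟨x₁, hx₁, -⟩ := cone_two hiso hcones α
    set m₂ := Γ.barLen F₂ α with hm₂def
    have hFx₁E : F₂ x₁ ∈ E := hF₂mem x₁ (hαE hx₁)
    have hFx₁s : F₂ x₁ ∈ Γ.shift := hEsub hFx₁E
    set ᾱ := prefixPath hFx₁s m₂ with hᾱdef
    have hlenᾱ : ᾱ.edges.length = m₂ := prefixPath_length hFx₁s _
    have hF₂C : ∀ x ∈ Γ.cone α, F₂ x ∈ Γ.cone ᾱ := by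
      intro x hx
      refine (mem_cone_prefixPath hFx₁s _).2 ⟨hEsub (hF₂mem x (hαE hx)), ?_, ?_⟩
      · have h0 : F₂ x 0 = F₂ x₁ 0 := agree_below_barLen F₂ α x hx x₁ hx₁ 0 (by omega)
        rw [h0]
      · intro i hi
        exact agree_below_barLen F₂ α x hx x₁ hx₁ i hi
    have hᾱE : Γ.cone ᾱ ⊆ E := by
      intro z hz
      obtain ⟨hzs, hz0, hzpre⟩ := (mem_cone_prefixPath hFx₁s _).1 hz
      refine hNE (F₂ x₁) hFx₁E z hzs ?_
      intro i hi
      exact (hzpre i (by omega)).symm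
    set q₂ := Γ.localAction F₂ α with hq₂def
    set q₁ := Γ.localAction F₁ ᾱ with hq₁def
    have hq₂Q : q₂ ∈ Q₂ := ⟨α, hαE, rfl⟩
    have hq₁Q : q₁ ∈ Q₁ := ⟨ᾱ, hᾱE, rfl⟩
    set m₁ := Γ.barLen F₁ ᾱ with hm₁def
    -- the composite computation
    have hcomp : ∀ x ∈ Γ.cone α, ∀ i : ℕ,
        H x (i + m₁) = q₁.2 (q₂.2 (tl α.edges.length x)) i := by
      intro x hx i
      have htt : tl ᾱ.edges.length (F₂ x) = q₂.2 (tl α.edges.length x) := by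
        funext j
        rw [hq₂def, localAction_snd_apply F₂ hx j]
        show F₂ x (j + ᾱ.edges.length) = F₂ x (j + m₂)
        rw [hlenᾱ]
      rw [← htt, hq₁def, localAction_snd_apply F₁ (hF₂C x hx) i, ← hHF x]
    -- boundedness of the agreement set of H
    have hbddH : BddAbove (agreeSet H α) := by
      apply bddAbove_agreeSet
      obtain ⟨x, hx, y, hy, hne⟩ := cone_two hiso hcones α
      have hHne : H x ≠ H y := fun h => hne (hHinj x (hαE hx) y (hαE hy) h)
      have hex : ∃ i, H x i ≠ H y i := by
        by_contra hc; push_neg at hc; exact hHne (funext hc)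
      obtain ⟨i, hi⟩ := hex
      exact ⟨x, hx, y, hy, i, hi⟩
    -- m₁ is in the agreement set of H
    have hm₁mem : m₁ ∈ agreeSet H α := by
      intro x hx y hy i hi
      rw [hHF x, hHF y]
      exact agree_below_barLen F₁ ᾱ _ (hF₂C x hx) _ (hF₂C y hy) i hi
    have hm₁le : m₁ ≤ Γ.barLen H α := le_barLen hbddH hm₁mem
    -- the shift equivalence
    have hiff : ∀ k : ℕ, (m₁ + k ∈ agreeSet H α) ↔ k ∈ pairSet q₁ q₂ := by
      intro k
      constructor
      · intro hk w hw w' hw' j hj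
        have hx : Γ.catPath α w ∈ Γ.cone α := catPath_mem_cone hcones hw
        have hx' : Γ.catPath α w' ∈ Γ.cone α := catPath_mem_cone hcones hw'
        have e1 : q₁.2 (q₂.2 w) j = H (Γ.catPath α w) (j + m₁) := by
          rw [← tl_catPath (α := α) w, ← hcomp _ hx j, tl_catPath]
        have e2 : q₁.2 (q₂.2 w') j = H (Γ.catPath α w') (j + m₁) := by
          rw [← tl_catPath (α := α) w', ← hcomp _ hx' j, tl_catPath]
        rw [e1, e2]
        exact hk _ hx _ hx' (j + m₁) (by omega)
      · intro hk x hx y hy i hi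
        rcases lt_or_ge i m₁ with hc | hc
        · exact hm₁mem x hx y hy i hc
        · have he : i = (i - m₁) + m₁ := by omega
          rw [he, hcomp x hx (i - m₁), hcomp y hy (i - m₁)]
          exact hk _ (tl_mem_trivCone hx) _ (tl_mem_trivCone hy) (i - m₁) (by omega)
      -- note: pairSet is defined via cone (trivPath q₂.1) = cone (trivPath (pathEnd α))
    have hSbdd : BddAbove (pairSet q₁ q₂) := by
      refine ⟨Γ.barLen H α - m₁, fun k hk => ?_⟩
      have := le_barLen hbddH ((hiff k).2 hk)
      omega
    have hSne : (pairSet q₁ q₂).Nonempty := ⟨0, fun w _ w' _ j hj => by omega⟩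
    have hmH : Γ.barLen H α = m₁ + pairLen q₁ q₂ := by
      have hge : m₁ + pairLen q₁ q₂ ≤ Γ.barLen H α :=
        le_barLen hbddH ((hiff _).2 (Nat.sSup_mem hSne hSbdd))
      have hle : Γ.barLen H α ≤ m₁ + pairLen q₁ q₂ := by
        have hmem : Γ.barLen H α ∈ agreeSet H α :=
          Nat.sSup_mem ⟨0, zero_mem_agreeSet H α⟩ hbddH
        have he : m₁ + (Γ.barLen H α - m₁) = Γ.barLen H α := by omega
        have : (Γ.barLen H α - m₁) ∈ pairSet q₁ q₂ := (hiff _).1 (by rw [he]; exact hmem)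
        have := le_csSup hSbdd this
        have hp : Γ.barLen H α - m₁ ≤ pairLen q₁ q₂ := this
        omega
      omega
    -- the reconstruction
    refine ⟨q₁, hq₁Q, q₂, hq₂Q, ?_⟩
    refine Prod.ext rfl ?_
    show (Γ.localAction H α).2 = (reconComp q₁ q₂).2
    funext w
    by_cases hw : w ∈ Γ.cone (Γ.trivPath (Γ.pathEnd α))
    · have hw' : w ∈ Γ.cone (Γ.trivPath q₂.1) := hw
      rw [localAction_snd_mem H α hw]
      show _ = if w ∈ Γ.cone (Γ.trivPath q₂.1) then
        tl (pairLen q₁ q₂) (q₁.2 (q₂.2 w)) else w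
      rw [if_pos hw']
      funext i
      have hx : Γ.catPath α w ∈ Γ.cone α := catPath_mem_cone hcones hw
      show H (Γ.catPath α w) (i + Γ.barLen H α) = q₁.2 (q₂.2 w) (i + pairLen q₁ q₂)
      rw [hmH]
      have he : i + (m₁ + pairLen q₁ q₂) = (i + pairLen q₁ q₂) + m₁ := by omega
      rw [he, hcomp _ hx (i + pairLen q₁ q₂), tl_catPath]
    · have hw' : w ∉ Γ.cone (Γ.trivPath q₂.1) := hw
      rw [localAction_snd_not_mem H α hw]
      show _ = if w ∈ Γ.cone (Γ.trivPath q₂.1) then _ else w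
      rw [if_neg hw']
  -- assemble
  have hfin : ((Γ.localAction H '' {α : Γ.FinPath | α.edges.length < U₂}) ∪
      ((fun p : (Γ.V × ((ℕ → Γ.E) → ℕ → Γ.E)) × (Γ.V × ((ℕ → Γ.E) → ℕ → Γ.E)) =>
        reconComp p.1 p.2) '' (Q₁ ×ˢ Q₂))).Finite :=
    ((finite_short_paths U₂).image _).union ((h₁.prod h₂).image _)
  refine Set.Finite.subset hfin ?_
  rintro - ⟨α, hα, rfl⟩
  by_cases hlen : α.edges.length < U₂
  · exact Or.inl ⟨α, hlen, rfl⟩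
  · right
    obtain ⟨q₁, hq₁, q₂, hq₂, heq⟩ := hmain α hα (hexc α hα (by omega))
    exact ⟨(q₁, q₂), ⟨hq₁, hq₂⟩, heq.symm⟩

end FinDigraph


/-- The inverse of a rational homeomorphism between nonempty clopen subsets of `Σ_Γ` is
rational; consequently the rational homeomorphisms `E → E` form a group `R_{Γ,E}` under
composition. -/
theorem inverse_rational_and_rational_group (Γ : FinDigraph)
    (hiso : Γ.NoIsolatedPoints) (hcones : Γ.NoEmptyCones)
    (E E' : Set (ℕ → Γ.E)) (hEsub : E ⊆ Γ.shift) (hEne : E.Nonempty)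
    (hEclopen : Γ.ClopenIn E) (hE'sub : E' ⊆ Γ.shift) (hE'ne : E'.Nonempty)
    (hE'clopen : Γ.ClopenIn E')
    (f : ↥E ≃ₜ ↥E') (hf : Γ.RationalOn (Γ.homExt E E' ⇑f) E) :
    Γ.RationalOn (Γ.homExt E' E ⇑f.symm) E' ∧
    ∃ R : Subgroup (Equiv.Perm ↥E),
      (R : Set (Equiv.Perm ↥E)) = {g | Γ.IsRatHomeo E g} := by
  constructor
  · exact FinDigraph.inv_rational hiso hcones hEsub hEclopen hE'sub hE'clopen f hf
  · have hmul : ∀ a b : Equiv.Perm ↥E, Γ.IsRatHomeo E a → Γ.IsRatHomeo E b →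
        Γ.IsRatHomeo E (a * b) := by
      intro a b ha hb
      obtain ⟨hac, hac', har⟩ := ha
      obtain ⟨hbc, hbc', hbr⟩ := hb
      refine ⟨?_, ?_, ?_⟩
      · show Continuous (⇑a ∘ ⇑b)
        exact hac.comp hbc
      · show Continuous (⇑b.symm ∘ ⇑a.symm)
        exact hbc'.comp hac'
      · exact FinDigraph.comp_rational hiso hcones hEsub hEclopen a b hac hac' hbc hbc'
          har hbr
    have hone : Γ.IsRatHomeo E (1 : Equiv.Perm ↥E) := by
      refine ⟨?_, ?_, ?_⟩
      · show Continuous (id : ↥E → ↥E)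
        exact continuous_id
      · show Continuous (id : ↥E → ↥E)
        exact continuous_id
      · rw [FinDigraph.permExt_one]
        exact FinDigraph.id_rational hiso hcones E
    have hinv : ∀ a : Equiv.Perm ↥E, Γ.IsRatHomeo E a → Γ.IsRatHomeo E a⁻¹ := by
      intro a ha
      obtain ⟨hac, hac', har⟩ := ha
      set fa : ↥E ≃ₜ ↥E :=
        { toEquiv := a, continuous_toFun := hac, continuous_invFun := hac' } with hfa
      have h2 := FinDigraph.inv_rational hiso hcones hEsub hEclopen hEsub hEclopen fa
        (show Γ.RationalOn (Γ.homExt E E ⇑fa) E from har)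
      refine ⟨?_, ?_, ?_⟩
      · show Continuous ⇑a.symm
        exact hac'
      · show Continuous ⇑a
        exact hac
      · show Γ.RationalOn (Γ.homExt E E ⇑fa.symm) E
        exact h2
    exact ⟨{ carrier := setOf (fun g => Γ.IsRatHomeo E g),
             mul_mem' := fun {a b} ha hb => hmul a b ha hb,
             one_mem' := hone,
             inv_mem' := fun {a} ha => hinv a ha }, rfl⟩
end
end

section
/- Let X be a Hausdorff topological space having a basis of clopen sets, and let G be a full group of homeomorphisms of X. Then G acts highly transitively on each of its orbits: for every G-orbit S ⊆ X, every n ≥ 1, and any two n-tuples of pairwise distinct points of S, some element of G carries the first tuple to the second coordinatewise. In particular, the action of G on each of its orbits is oligomorphic. -/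
theorem aux_swap (X : Type) [TopologicalSpace X] [T2Space X]
    (hbasis : ∀ (x : X) (U : Set X), IsOpen U → x ∈ U →
      ∃ V : Set X, IsClopen V ∧ x ∈ V ∧ V ⊆ U)
    (G : Subgroup (Equiv.Perm X))
    (hhomeo : ∀ g ∈ G, Continuous ⇑g ∧ Continuous ⇑g.symm)
    (hfull : ∀ h : Equiv.Perm X, Continuous ⇑h → Continuous ⇑h.symm →
      (∀ x : X, ∃ U : Set X, IsOpen U ∧ x ∈ U ∧ ∃ g ∈ G, ∀ u ∈ U, h u = g u) →
      h ∈ G)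
    (y z : X) (hyz : y ≠ z) (g0 : Equiv.Perm X) (hg0 : g0 ∈ G) (hg0y : g0 y = z)
    (F : Set X) (hF : F.Finite) (hyF : y ∉ F) (hzF : z ∉ F) :
    ∃ h ∈ G, h y = z ∧ ∀ w ∈ F, h w = w := by
  classical
  obtain ⟨hg0c, hg0sc⟩ := hhomeo g0 hg0
  have hFz : IsClosed (F ∪ {z}) := (hF.union (Set.finite_singleton z)).isClosed
  have hFy : IsClosed (F ∪ {y}) := (hF.union (Set.finite_singleton y)).isClosed
  obtain ⟨A, B, hA, hB, hyA, hzB, hAB⟩ := t2_separation hyz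
  set U : Set X := ((F ∪ {z})ᶜ ∩ ⇑g0 ⁻¹' (F ∪ {y})ᶜ) ∩ (A ∩ ⇑g0 ⁻¹' B) with hUdef
  have hUopen : IsOpen U :=
    ((hFz.isOpen_compl.inter (hFy.isOpen_compl.preimage hg0c)).inter
      (hA.inter (hB.preimage hg0c)))
  have hyU : y ∈ U := by
    refine ⟨⟨?_, ?_⟩, hyA, ?_⟩
    · simp only [Set.mem_compl_iff, Set.mem_union, Set.mem_singleton_iff]
      tauto
    · simp only [Set.mem_preimage, hg0y, Set.mem_compl_iff, Set.mem_union,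
        Set.mem_singleton_iff]
      exact fun h => h.elim hzF (fun h => hyz h.symm)
    · simpa [Set.mem_preimage, hg0y] using hzB
  obtain ⟨V, hVclopen, hyV, hVU⟩ := hbasis y U hUopen hyU
  set W : Set X := ⇑g0 '' V with hWdef
  have hWpre : W = ⇑g0.symm ⁻¹' V := Equiv.image_eq_preimage_symm _ _
  have hWclopen : IsClopen W := hWpre ▸ hVclopen.preimage hg0sc
  have hVW : Disjoint V W := by
    refine Set.disjoint_left.mpr fun w hwV hwW => ?_
    obtain ⟨v, hv, rfl⟩ := hwW
    exact Set.disjoint_left.mp hAB (hVU hwV).2.1 (hVU hv).2.2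
  -- the involution
  set f : X → X := fun w => if w ∈ V then g0 w else if w ∈ W then g0.symm w else w
    with hfdef
  have hfV : ∀ w ∈ V, f w = g0 w := fun w hw => if_pos hw
  have hfW : ∀ w ∈ W, f w = g0.symm w := fun w hw => by
    rw [hfdef]; simp only; rw [if_neg (Set.disjoint_right.mp hVW hw), if_pos hw]
  have hfO : ∀ w, w ∉ V → w ∉ W → f w = w := fun w h1 h2 => by
    rw [hfdef]; simp only; rw [if_neg h1, if_neg h2]
  have hinv : Function.Involutive f := by
    intro w
    by_cases hwV : w ∈ V
    · have h1 : f w = g0 w := hfV w hwV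
      have h2 : g0 w ∈ W := ⟨w, hwV, rfl⟩
      rw [h1, hfW _ h2, Equiv.symm_apply_apply]
    · by_cases hwW : w ∈ W
      · have h1 : f w = g0.symm w := hfW w hwW
        have h2 : g0.symm w ∈ V := by
          obtain ⟨v, hv, rfl⟩ := hwW
          simpa using hv
        rw [h1, hfV _ h2, Equiv.apply_symm_apply]
      · rw [hfO w hwV hwW, hfO w hwV hwW]
  set h : Equiv.Perm X := hinv.toPerm f with hhdef
  have hcoe : ⇑h = f := rfl
  have hcoesymm : ⇑h.symm = f := rfl
  have hcont : Continuous f := by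
    rw [continuous_iff_continuousAt]
    intro x
    by_cases hx : x ∈ V
    · exact hg0c.continuousAt.congr
        (Filter.eventuallyEq_of_mem (hVclopen.isOpen.mem_nhds hx) hfV).symm
    · by_cases hx' : x ∈ W
      · exact hg0sc.continuousAt.congr
          (Filter.eventuallyEq_of_mem (hWclopen.isOpen.mem_nhds hx') hfW).symm
      · have hopen : IsOpen (V ∪ W)ᶜ := (hVclopen.isClosed.union hWclopen.isClosed).isOpen_compl
        refine continuous_id.continuousAt.congr
          (Filter.eventuallyEq_of_mem (hopen.mem_nhds ?_) ?_).symm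
        · simp only [Set.mem_compl_iff, Set.mem_union]; tauto
        · intro w hw
          simp only [Set.mem_compl_iff, Set.mem_union] at hw
          exact (hfO w (fun h => hw (Or.inl h)) (fun h => hw (Or.inr h))).trans rfl
  have hmem : h ∈ G := by
    refine hfull h (hcoe ▸ hcont) (hcoesymm ▸ hcont) fun x => ?_
    by_cases hx : x ∈ V
    · exact ⟨V, hVclopen.isOpen, hx, g0, hg0, fun u hu => hfV u hu⟩
    · by_cases hx' : x ∈ W
      · refine ⟨W, hWclopen.isOpen, hx', g0⁻¹, inv_mem hg0, fun u hu => hfW u hu⟩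
      · refine ⟨(V ∪ W)ᶜ, (hVclopen.isClosed.union hWclopen.isClosed).isOpen_compl,
          ?_, 1, one_mem G, fun u hu => ?_⟩
        · simp only [Set.mem_compl_iff, Set.mem_union]; tauto
        · simp only [Set.mem_compl_iff, Set.mem_union] at hu
          simpa [hcoe] using hfO u (fun h => hu (Or.inl h)) (fun h => hu (Or.inr h))
  refine ⟨h, hmem, by rw [hcoe, hfV y hyV, hg0y], fun w hw => ?_⟩
  have hwV : w ∉ V := fun h => by
    have := (hVU h).1.1
    simp only [Set.mem_compl_iff, Set.mem_union] at this
    exact this (Or.inl hw)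
  have hwW : w ∉ W := by
    rintro ⟨v, hv, rfl⟩
    have := (hVU hv).1.2
    simp only [Set.mem_preimage, Set.mem_compl_iff, Set.mem_union] at this
    exact this (Or.inl hw)
  rw [hcoe, hfO w hwV hwW]

theorem aux_trans (X : Type) [TopologicalSpace X] [T2Space X]
    (hbasis : ∀ (x : X) (U : Set X), IsOpen U → x ∈ U →
      ∃ V : Set X, IsClopen V ∧ x ∈ V ∧ V ⊆ U)
    (G : Subgroup (Equiv.Perm X))
    (hhomeo : ∀ g ∈ G, Continuous ⇑g ∧ Continuous ⇑g.symm)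
    (hfull : ∀ h : Equiv.Perm X, Continuous ⇑h → Continuous ⇑h.symm →
      (∀ x : X, ∃ U : Set X, IsOpen U ∧ x ∈ U ∧ ∃ g ∈ G, ∀ u ∈ U, h u = g u) →
      h ∈ G)
    (x₀ : X) :
    ∀ (k : ℕ) (a b : Fin k → X), (∀ i, ∃ g ∈ G, g x₀ = a i) →
      (∀ i, ∃ g ∈ G, g x₀ = b i) →
      Function.Injective a → Function.Injective b →
      ∃ g ∈ G, ∀ i, g (a i) = b i := by
  intro k
  induction k with
  | zero => exact fun a b _ _ _ _ => ⟨1, one_mem G, fun i => i.elim0⟩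
  | succ n ih =>
    intro a b ha hb hai hbi
    obtain ⟨g, hg, hgab⟩ := ih (fun i => a i.castSucc) (fun i => b i.castSucc)
      (fun i => ha _) (fun i => hb _)
      (fun i j hij => Fin.castSucc_injective _ (hai hij))
      (fun i j hij => Fin.castSucc_injective _ (hbi hij))
    set y := g (a (Fin.last n)) with hy
    set z := b (Fin.last n) with hz
    by_cases hyz : y = z
    · refine ⟨g, hg, fun i => ?_⟩
      refine Fin.lastCases ?_ ?_ i
      · exact hyz
      · exact fun j => hgab j
    · obtain ⟨gy, hgy, hgyx⟩ := ha (Fin.last n)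
      obtain ⟨gz, hgz, hgzx⟩ := hb (Fin.last n)
      have hg0y : (gz * gy⁻¹ * g⁻¹) y = z := by
        simp only [hy, hz, Equiv.Perm.mul_apply]
        rw [show g⁻¹ (g (a (Fin.last n))) = a (Fin.last n) from g.symm_apply_apply _,
          ← hgyx, show gy⁻¹ (gy x₀) = x₀ from gy.symm_apply_apply _, hgzx]
      set F : Set X := Set.range (fun i : Fin n => b i.castSucc) with hF
      have hFfin : F.Finite := Set.finite_range _
      have hyF : y ∉ F := by
        rintro ⟨i, hi⟩
        have h1 : g (a i.castSucc) = g (a (Fin.last n)) := by rw [hgab i]; exact hi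
        have := hai (g.injective h1)
        exact absurd this (Fin.ne_last_of_lt (Fin.castSucc_lt_last i))
      have hzF : z ∉ F := by
        rintro ⟨i, hi⟩
        have := hbi hi
        exact absurd this (Fin.ne_last_of_lt (Fin.castSucc_lt_last i))
      obtain ⟨h, hh, hhy, hhF⟩ := aux_swap X hbasis G hhomeo hfull y z hyz
        (gz * gy⁻¹ * g⁻¹) (mul_mem (mul_mem hgz (inv_mem hgy)) (inv_mem hg)) hg0y
        F hFfin hyF hzF
      refine ⟨h * g, mul_mem hh hg, fun i => ?_⟩
      refine Fin.lastCases ?_ ?_ i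
      · simpa using hhy
      · intro j
        simp only [Equiv.Perm.mul_apply, hgab j]
        exact hhF _ ⟨j, rfl⟩

/-- Let `X` be a Hausdorff space with a basis of clopen sets and let `G` be a full
group of homeomorphisms of `X`.  Then `G` acts highly transitively on each of its
orbits; in particular the action on each orbit is oligomorphic. -/
theorem full_group_highly_transitive_on_orbits (X : Type) [TopologicalSpace X]
    [T2Space X]
    (hbasis : ∀ (x : X) (U : Set X), IsOpen U → x ∈ U →
      ∃ V : Set X, IsClopen V ∧ x ∈ V ∧ V ⊆ U)
    (G : Subgroup (Equiv.Perm X))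
    (hhomeo : ∀ g ∈ G, Continuous ⇑g ∧ Continuous ⇑g.symm)
    (hfull : ∀ h : Equiv.Perm X, Continuous ⇑h → Continuous ⇑h.symm →
      (∀ x : X, ∃ U : Set X, IsOpen U ∧ x ∈ U ∧ ∃ g ∈ G, ∀ u ∈ U, h u = g u) →
      h ∈ G)
    (x₀ : X) (S : Set X) (hS : S = {y | ∃ g ∈ G, g x₀ = y}) :
    (∀ (k : ℕ) (a b : Fin k → X), (∀ i, a i ∈ S) → (∀ i, b i ∈ S) →
      Function.Injective a → Function.Injective b →
      ∃ g ∈ G, ∀ i, g (a i) = b i) ∧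
    ∀ k : ℕ, ∃ R : Set (Fin k → X), R.Finite ∧ (∀ r ∈ R, ∀ i, r i ∈ S) ∧
      ∀ a : Fin k → X, (∀ i, a i ∈ S) → ∃ r ∈ R, ∃ g ∈ G, ∀ i, g (r i) = a i := by
  classical
  have hmemS : ∀ w, w ∈ S ↔ ∃ g ∈ G, g x₀ = w := fun w => by rw [hS]; rfl
  have htrans : ∀ (k : ℕ) (a b : Fin k → X), (∀ i, a i ∈ S) → (∀ i, b i ∈ S) →
      Function.Injective a → Function.Injective b →
      ∃ g ∈ G, ∀ i, g (a i) = b i := by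
    intro k a b ha hb hai hbi
    exact aux_trans X hbasis G hhomeo hfull x₀ k a b
      (fun i => (hmemS _).mp (ha i)) (fun i => (hmemS _).mp (hb i)) hai hbi
  refine ⟨htrans, fun k => ?_⟩
  by_cases hSfin : S.Finite
  · refine ⟨Set.univ.pi (fun _ : Fin k => S), Set.Finite.pi (fun _ => hSfin),
      fun r hr i => hr i (Set.mem_univ i), fun a ha => ?_⟩
    exact ⟨a, fun i _ => ha i, 1, one_mem G, fun i => rfl⟩
  · have hSinf : S.Infinite := hSfin
    set emb : ℕ ↪ S := Set.Infinite.natEmbedding S hSinf with hemb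
    set c : Fin k → X := fun i => (emb i.val : X) with hc
    have hcS : ∀ i, c i ∈ S := fun i => (emb i.val).2
    have hcinj : Function.Injective c := fun i j hij => by
      have := emb.injective (Subtype.val_injective hij)
      exact Fin.val_injective this
    refine ⟨Set.range (fun q : Fin k → Fin k => c ∘ q), Set.finite_range _,
      ?_, fun a ha => ?_⟩
    · rintro r ⟨q, rfl⟩ i
      exact hcS (q i)
    · -- canonical index map
      set q : Fin k → Fin k := fun i =>
        (Finset.univ.filter (fun j => a j = a i)).min' ⟨i, by simp⟩ with hq
      have hqmem : ∀ i, q i ∈ Finset.univ.filter (fun j => a j = a i) := fun i =>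
        Finset.min'_mem _ _
      have haq : ∀ i, a (q i) = a i := fun i => by
        have := hqmem i; simp only [Finset.mem_filter] at this; exact this.2
      have hqeq : ∀ i j, a i = a j → q i = q j := fun i j hij => by
        simp only [hq, hij]
      have hqq : ∀ i, q (q i) = q i := fun i => hqeq _ _ (haq i)
      -- the fixed-point subtype
      set P := {i : Fin k // q i = i} with hP
      set e : P ≃ Fin (Fintype.card P) := Fintype.equivFin P with he
      set a' : Fin (Fintype.card P) → X := fun j => a ((e.symm j) : Fin k) with ha'
      set c' : Fin (Fintype.card P) → X := fun j => c ((e.symm j) : Fin k) with hc'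
      have ha'inj : Function.Injective a' := by
        intro j j' hjj'
        have h1 : q ((e.symm j) : Fin k) = q ((e.symm j') : Fin k) := hqeq _ _ hjj'
        rw [(e.symm j).2, (e.symm j').2] at h1
        exact e.symm.injective (Subtype.ext h1)
      have hc'inj : Function.Injective c' := fun j j' hjj' =>
        e.symm.injective (Subtype.ext (hcinj hjj'))
      obtain ⟨g, hg, hgc⟩ := htrans (Fintype.card P) c' a'
        (fun j => hcS _) (fun j => ha _) hc'inj ha'inj
      refine ⟨c ∘ q, ⟨q, rfl⟩, g, hg, fun i => ?_⟩
      have hmem : (⟨q i, hqq i⟩ : P) = e.symm (e ⟨q i, hqq i⟩) := (e.symm_apply_apply _).symm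
      have := hgc (e ⟨q i, hqq i⟩)
      simp only [hc', ha', ← hmem] at this
      simpa [haq i] using this
end
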